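/- arXiv:math/0307100 — 3 statements merged into one kernel-verified Lean document; each statement's English description precedes it below -/
import Mathlib

section
/- The kernel of the natural map i_*: H_ℓ^Q(G;A) → H_ℓ(G;A) is annihilated by |Q| for every ℓ. -/
namespace IGC

noncomputable section
set_option linter.unusedSectionVars false

/-- The group of `n`-chains of the bar complex of `G` with coefficients in `A`
(trivial `G`-action): the free `A`-module on `n`-tuples of elements of `G`. -/
abbrev C (G : Type*) [Group G] (A : Type*) [AddCommGroup A] (n : ℕ) : Type _ :=
  (Fin n → G) →₀ A

/-- The `i`-th face of a bar symbol `[g_1|⋯|g_{n+1}]`. -/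
def barFace {G : Type*} [Group G] {n : ℕ} (i : Fin (n + 2)) (g : Fin (n + 1) → G) :
    Fin n → G := fun j =>
  if (j : ℕ) + 1 < (i : ℕ) then g j.castSucc
  else if (j : ℕ) + 1 = (i : ℕ) then g j.castSucc * g j.succ
  else g j.succ

/-- The boundary map of the bar complex. -/
def barD (G : Type*) [Group G] (A : Type*) [AddCommGroup A] (n : ℕ) :
    C G A (n + 1) →+ C G A n :=
  Finsupp.liftAddHom fun g =>
    { toFun := fun a => ∑ i : Fin (n + 2), Finsupp.single (barFace i g) (((-1 : ℤ) ^ (i : ℕ)) • a)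
      map_zero' := by simp
      map_add' := fun a b => by
        simp [smul_add, Finsupp.single_add, Finset.sum_add_distrib] }

lemma barD_single {G : Type*} [Group G] {A : Type*} [AddCommGroup A] (n : ℕ)
    (g : Fin (n + 1) → G) (a : A) :
    barD G A n (Finsupp.single g a) =
      ∑ i : Fin (n + 2), Finsupp.single (barFace i g) (((-1 : ℤ) ^ (i : ℕ)) • a) := by
  rw [barD, Finsupp.liftAddHom_apply_single]; rfl

/-- The boundary map out of degree `n` (the zero map for `n = 0`). -/
def barDFrom (G : Type*) [Group G] (A : Type*) [AddCommGroup A] :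
    (n : ℕ) → C G A n →+ C G A (n - 1)
  | 0 => 0
  | n + 1 => barD G A n

/-- The chain map on bar complexes induced by a group homomorphism. -/
def chainMapOf (G : Type*) [Group G] (A : Type*) [AddCommGroup A] {H : Type*} [Group H]
    (φ : H →* G) (n : ℕ) : C H A n →+ C G A n :=
  Finsupp.mapDomain.addMonoidHom fun g j => φ (g j)

lemma chainMapOf_single (G : Type*) [Group G] (A : Type*) [AddCommGroup A] {H : Type*} [Group H]
    (φ : H →* G) (n : ℕ) (g : Fin n → H) (a : A) :
    chainMapOf G A φ n (Finsupp.single g a) = Finsupp.single (fun j => φ (g j)) a := by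
  rw [chainMapOf, Finsupp.mapDomain.addMonoidHom_apply, Finsupp.mapDomain_single]

lemma barFace_comp {G : Type*} [Group G] {H : Type*} [Group H] (φ : H →* G) {n : ℕ}
    (i : Fin (n + 2)) (g : Fin (n + 1) → H) :
    (barFace i fun j => φ (g j)) = fun j => φ (barFace i g j) := by
  funext j
  unfold barFace
  split_ifs <;> simp

lemma chainMapOf_barD (G : Type*) [Group G] (A : Type*) [AddCommGroup A] {H : Type*} [Group H]
    (φ : H →* G) (n : ℕ) :
    (barD G A n).comp (chainMapOf G A φ (n + 1)) = (chainMapOf G A φ n).comp (barD H A n) := by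
  apply Finsupp.addHom_ext
  intro g a
  rw [AddMonoidHom.comp_apply, AddMonoidHom.comp_apply, chainMapOf_single, barD_single,
    barD_single, map_sum]
  refine Finset.sum_congr rfl fun i _ => ?_
  rw [chainMapOf_single, barFace_comp]

lemma chainMapOf_comp (G : Type*) [Group G] (A : Type*) [AddCommGroup A]
    {H K : Type*} [Group H] [Group K] (ψ : H →* G) (φ : K →* H) (n : ℕ) :
    (chainMapOf G A ψ n).comp (chainMapOf H A φ n) = chainMapOf G A (ψ.comp φ) n := by
  apply Finsupp.addHom_ext
  intro g a
  rw [AddMonoidHom.comp_apply, chainMapOf_single, chainMapOf_single, chainMapOf_single]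
  rfl

section Action

variable (G : Type*) [Group G] (A : Type*) [AddCommGroup A]
variable (Q : Type*) [Group Q] [Fintype Q] [MulDistribMulAction Q G]

/-- The action of `q : Q` on bar chains. -/
def qMap (q : Q) (n : ℕ) : C G A n →+ C G A n :=
  chainMapOf G A (MulDistribMulAction.toMonoidHom G q) n

/-- The subgroup of `Q`-fixed elements of `G`. -/
def fixedSubgroup : Subgroup G where
  carrier := {g | ∀ q : Q, q • g = g}
  one_mem' := fun q => smul_one q
  mul_mem' := fun ha hb q => by rw [smul_mul', ha q, hb q]
  inv_mem' := fun ha q => by rw [smul_inv', ha q]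

/-- The subcomplex of `Q`-invariant bar chains. -/
def invC (n : ℕ) : AddSubgroup (C G A n) :=
  ⨅ q : Q, (qMap G A Q q n - AddMonoidHom.id (C G A n)).ker

/-- Cycles of the bar complex. -/
def cycles (n : ℕ) : AddSubgroup (C G A n) := (barDFrom G A n).ker

/-- Boundaries of the bar complex. -/
def boundaries (n : ℕ) : AddSubgroup (C G A n) := (barD G A n).range

/-- The group homology `H_n(G;A)` (with trivial action on `A`), computed from the bar complex. -/
abbrev barHomology (n : ℕ) : Type _ :=
  cycles G A n ⧸ (boundaries G A n).addSubgroupOf (cycles G A n)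

/-- `Q`-invariant cycles. -/
def invCycles (n : ℕ) : AddSubgroup (C G A n) := invC G A Q n ⊓ cycles G A n

/-- Boundaries of `Q`-invariant chains. -/
def invBoundaries (n : ℕ) : AddSubgroup (C G A n) := (invC G A Q (n + 1)).map (barD G A n)

/-- `H_n^Q(G;A)`: the homology of the subcomplex of `Q`-invariant bar chains. -/
abbrev invHomology (n : ℕ) : Type _ :=
  invCycles G A Q n ⧸ (invBoundaries G A Q n).addSubgroupOf (invCycles G A Q n)

/-- The map `i_* : H_n^Q(G;A) → H_n(G;A)` induced by the inclusion of complexes. -/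
def inclHom (n : ℕ) : invHomology G A Q n →+ barHomology G A n :=
  QuotientAddGroup.map _ _ (AddSubgroup.inclusion inf_le_right) (by
    intro x hx
    rw [AddSubgroup.mem_addSubgroupOf] at hx
    rw [AddSubgroup.mem_comap, AddSubgroup.mem_addSubgroupOf]
    obtain ⟨y, -, hy⟩ := hx
    exact ⟨y, hy⟩)

/-- The subgroup `H_n(G;A)^Q` of `Q`-invariant homology classes. -/
def invariantClasses (n : ℕ) : AddSubgroup (barHomology G A n) :=
  ((⨅ q : Q, (boundaries G A n).comap (qMap G A Q q n - AddMonoidHom.id (C G A n))).addSubgroupOf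
    (cycles G A n)).map
      (QuotientAddGroup.mk' ((boundaries G A n).addSubgroupOf (cycles G A n)))

lemma chainMapOf_fixed_mem_invC (n : ℕ) (c : C (fixedSubgroup G Q) A n) :
    chainMapOf G A (fixedSubgroup G Q).subtype n c ∈ invC G A Q n := by
  have key : ∀ q : Q, (qMap G A Q q n).comp (chainMapOf G A (fixedSubgroup G Q).subtype n)
      = chainMapOf G A (fixedSubgroup G Q).subtype n := by
    intro q
    rw [qMap, chainMapOf_comp]
    congr 1
    ext x
    exact x.2 q
  rw [invC, AddSubgroup.mem_iInf]
  intro q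
  rw [AddMonoidHom.mem_ker, AddMonoidHom.sub_apply, sub_eq_zero, AddMonoidHom.id_apply,
    ← AddMonoidHom.comp_apply, key q]


lemma chainMapOf_barDFrom (n : ℕ) (c : C (fixedSubgroup G Q) A n) :
    barDFrom G A n (chainMapOf G A (fixedSubgroup G Q).subtype n c)
      = chainMapOf G A (fixedSubgroup G Q).subtype (n - 1)
          (barDFrom (fixedSubgroup G Q) A n c) := by
  match n with
  | 0 => simp [barDFrom]
  | n + 1 =>
      show (barD G A n) (chainMapOf G A (fixedSubgroup G Q).subtype (n + 1) c) = _
      rw [← AddMonoidHom.comp_apply, chainMapOf_barD]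
      rfl

/-- The map `H_n(G^Q;A) → H_n^Q(G;A)` induced by the inclusion of complexes. -/
def subIncl (n : ℕ) : barHomology (fixedSubgroup G Q) A n →+ invHomology G A Q n :=
  QuotientAddGroup.map _ _
    (((chainMapOf G A (fixedSubgroup G Q).subtype n).comp
        (cycles (fixedSubgroup G Q) A n).subtype).codRestrict (invCycles G A Q n) (by
      intro x
      rw [invCycles, AddSubgroup.mem_inf]
      refine ⟨chainMapOf_fixed_mem_invC G A Q n _, AddMonoidHom.mem_ker.mpr ?_⟩
      rw [AddMonoidHom.comp_apply, AddSubgroup.coe_subtype, chainMapOf_barDFrom,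
        AddMonoidHom.mem_ker.mp x.2, map_zero]))
    (by
      intro x hx
      rw [AddSubgroup.mem_addSubgroupOf] at hx
      obtain ⟨σ, hσ⟩ := hx
      rw [AddSubgroup.mem_comap, AddSubgroup.mem_addSubgroupOf]
      show ((chainMapOf G A (fixedSubgroup G Q).subtype n).comp
        (cycles (fixedSubgroup G Q) A n).subtype) x ∈ invBoundaries G A Q n
      rw [AddMonoidHom.comp_apply, AddSubgroup.coe_subtype, ← hσ, ← AddMonoidHom.comp_apply,
        ← chainMapOf_barD]
      exact ⟨chainMapOf G A (fixedSubgroup G Q).subtype (n + 1) σ,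
        chainMapOf_fixed_mem_invC G A Q (n + 1) σ, rfl⟩)

/-- The subgroup generated by differences `q • c - c`, i.e. the kernel of the map
to the coinvariants (the cellular chains of the quotient space `BG/Q`). -/
def W (n : ℕ) : AddSubgroup (C G A n) :=
  ⨆ q : Q, (qMap G A Q q n - AddMonoidHom.id (C G A n)).range

/-- Cycles of the coinvariants complex (the cellular chain complex of `BG/Q`),
presented as chains whose boundary lies in `W`. -/
def quotCycles (n : ℕ) : AddSubgroup (C G A n) := (W G A Q (n - 1)).comap (barDFrom G A n)

/-- Boundaries of the coinvariants complex, presented in `C_n(G;A)`. -/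
def quotBoundaries (n : ℕ) : AddSubgroup (C G A n) := W G A Q n ⊔ (barD G A n).range

/-- `H_n(BG/Q;A)`: the homology of the coinvariants complex, i.e. of the
cellular chain complex of the quotient CW-complex `BG/Q`. -/
abbrev quotHomology (n : ℕ) : Type _ :=
  quotCycles G A Q n ⧸ (quotBoundaries G A Q n).addSubgroupOf (quotCycles G A Q n)

/-- The image of the norm map `N : C_n(BG/Q) → C_n(G)^Q` sending the class of a
bar symbol to the sum over its `Q`-orbit. -/
def normImage (n : ℕ) : AddSubgroup (C G ℤ n) :=
  letI := Classical.decEq (Fin n → G)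
  AddSubgroup.closure {c | ∃ g : Fin n → G,
    c = ∑ x ∈ Finset.image (fun q : Q => fun j => q • g j) Finset.univ, Finsupp.single x (1 : ℤ)}

/-- The degree-`n` part of the cokernel `D_• = C_•(G)^Q / N(C_•(BG/Q))` of the norm map. -/
abbrev DChains (n : ℕ) : Type _ :=
  invC G ℤ Q n ⧸ (normImage G Q n).addSubgroupOf (invC G ℤ Q n)

/-- Cycles of the quotient complex `D_•`. -/
def DCycles (n : ℕ) : AddSubgroup (C G ℤ n) :=
  invC G ℤ Q n ⊓ (normImage G Q (n - 1)).comap (barDFrom G ℤ n)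

/-- Boundaries of the quotient complex `D_•`. -/
def DBoundaries (n : ℕ) : AddSubgroup (C G ℤ n) :=
  normImage G Q n ⊔ (invC G ℤ Q (n + 1)).map (barD G ℤ n)

/-- `h_n(D_•)`: the homology of the cokernel of the norm map. -/
abbrev DHomology (n : ℕ) : Type _ :=
  DCycles G Q n ⧸ (DBoundaries G Q n).addSubgroupOf (DCycles G Q n)

/-- Cellular cochains of `BG/Q` with `ℤ/2` coefficients: homomorphisms on chains. -/
abbrev Cochain (n : ℕ) : Type _ := C G ℤ n →+ ZMod 2

/-- Cochains vanishing on a subgroup of chains. -/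
def vanishing (n : ℕ) (S : AddSubgroup (C G ℤ n)) : AddSubgroup (Cochain G n) where
  carrier := {f | ∀ c ∈ S, f c = 0}
  zero_mem' := fun c _ => rfl
  add_mem' := fun hf hg c hc => by
    rw [AddMonoidHom.add_apply, hf c hc, hg c hc, add_zero]
  neg_mem' := fun hf c hc => by
    rw [AddMonoidHom.neg_apply, hf c hc, neg_zero]

/-- Precomposition with a boundary map as the coboundary operator. -/
def precomp {n m : ℕ} (d : C G ℤ m →+ C G ℤ n) : Cochain G n →+ Cochain G m :=
  AddMonoidHom.mk' (fun f => f.comp d) (fun f g => by ext c; simp)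

/-- Cocycles of the `ℤ/2`-cochain complex of `BG/Q`. -/
def quotCocycles (q : ℕ) : AddSubgroup (Cochain G q) :=
  vanishing G q (W G ℤ Q q) ⊓ (precomp G (barD G ℤ q)).ker

/-- Coboundaries of the `ℤ/2`-cochain complex of `BG/Q`. -/
def quotCoboundaries (q : ℕ) : AddSubgroup (Cochain G q) :=
  (vanishing G (q - 1) (W G ℤ Q (q - 1))).map (precomp G (barDFrom G ℤ q))

/-- `H^q(BG/Q; ℤ/2)`: the cellular cohomology of the quotient space with `ℤ/2` coefficients. -/
abbrev quotCohomology (q : ℕ) : Type _ :=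
  quotCocycles G Q q ⧸ (quotCoboundaries G Q q).addSubgroupOf (quotCocycles G Q q)

end Action

/-- The action of `ℤˣ ≅ ℤ/2` on a commutative group by inversion (negation):
the nontrivial element acts by `g ↦ g⁻¹`. -/
instance negAction (Γ : Type*) [CommGroup Γ] : MulDistribMulAction ℤˣ Γ where
  smul u g := g ^ (u : ℤ)
  one_smul g := by show g ^ ((1 : ℤˣ) : ℤ) = g; simp
  mul_smul u v g := by
    show g ^ ((↑(u * v) : ℤ)) = (g ^ (v : ℤ)) ^ (u : ℤ)
    rw [Units.val_mul, mul_comm, zpow_mul]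
  smul_mul u a b := mul_zpow a b (u : ℤ)
  smul_one u := one_zpow _

end
end IGC

section Aux

open IGC

variable (G : Type*) [Group G] (A : Type*) [AddCommGroup A]
  (Q : Type*) [Group Q] [Fintype Q] [MulDistribMulAction Q G]

lemma aux_qMap_mul (q q' : Q) (n : ℕ) :
    (qMap G A Q q n).comp (qMap G A Q q' n) = qMap G A Q (q * q') n := by
  rw [qMap, qMap, qMap, chainMapOf_comp]
  congr 1
  ext g
  exact (mul_smul q q' g).symm

lemma aux_mem_invC {n : ℕ} {c : IGC.C G A n} (hc : c ∈ invC G A Q n) (q : Q) :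
    qMap G A Q q n c = c := by
  rw [invC, AddSubgroup.mem_iInf] at hc
  have := hc q
  rw [AddMonoidHom.mem_ker, AddMonoidHom.sub_apply, AddMonoidHom.id_apply, sub_eq_zero] at this
  exact this

lemma aux_norm_mem_invC (n : ℕ) (σ : IGC.C G A n) :
    (∑ q : Q, qMap G A Q q n σ) ∈ invC G A Q n := by
  rw [invC, AddSubgroup.mem_iInf]
  intro q
  rw [AddMonoidHom.mem_ker, AddMonoidHom.sub_apply, AddMonoidHom.id_apply, sub_eq_zero, map_sum]
  simp_rw [← AddMonoidHom.comp_apply, aux_qMap_mul]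
  exact Fintype.sum_equiv (Equiv.mulLeft q) _ _ (fun q' => by rw [Equiv.coe_mulLeft])

lemma aux_barD_qMap (q : Q) (n : ℕ) (σ : IGC.C G A (n + 1)) :
    barD G A n (qMap G A Q q (n + 1) σ) = qMap G A Q q n (barD G A n σ) := by
  exact DFunLike.congr_fun (chainMapOf_barD G A (MulDistribMulAction.toMonoidHom G q) n) σ

end Aux

/-- the kernel of `i_* : H_ℓ^Q(G;A) → H_ℓ(G;A)` is annihilated by `|Q|`. -/
theorem stmt3 (G : Type*) [Group G] (A : Type*) [AddCommGroup A]
    (Q : Type*) [Group Q] [Fintype Q] [MulDistribMulAction Q G] (n : ℕ)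
    (x : IGC.invHomology G A Q n) (hx : IGC.inclHom G A Q n x = 0) :
    Fintype.card Q • x = 0 := by
  obtain ⟨z, rfl⟩ := QuotientAddGroup.mk'_surjective _ x
  rw [IGC.inclHom, QuotientAddGroup.map_mk', QuotientAddGroup.eq_zero_iff,
    AddSubgroup.mem_addSubgroupOf] at hx
  change (z : IGC.C G A n) ∈ IGC.boundaries G A n at hx
  obtain ⟨σ, hσ⟩ := hx
  rw [← map_nsmul, QuotientAddGroup.mk'_apply, QuotientAddGroup.eq_zero_iff,
    AddSubgroup.mem_addSubgroupOf]
  have hcoe : ((Fintype.card Q • z : IGC.invCycles G A Q n) : IGC.C G A n)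
      = Fintype.card Q • (z : IGC.C G A n) := rfl
  rw [hcoe]
  refine ⟨∑ q : Q, IGC.qMap G A Q q (n + 1) σ, aux_norm_mem_invC G A Q (n + 1) σ, ?_⟩
  rw [map_sum]
  have hz : (z : IGC.C G A n) ∈ IGC.invC G A Q n := z.2.1
  have : ∀ q : Q, IGC.barD G A n (IGC.qMap G A Q q (n + 1) σ) = (z : IGC.C G A n) := by
    intro q
    rw [aux_barD_qMap, hσ, aux_mem_invC G A Q hz q]
  simp_rw [this]
  rw [Finset.sum_const, Finset.card_univ]
end

section
/- If G is a finite group, then H_i^Q(G;A) is annihilated by |G| for all i > 0. -/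
namespace IGC
noncomputable section
set_option linter.unusedSectionVars false
set_option maxHeartbeats 800000

variable {G : Type*} [Group G] [Fintype G] {A : Type*} [AddCommGroup A]

/-- The chain homotopy: append a last entry and sum over the group. -/
def sMap (G : Type*) [Group G] [Fintype G] (A : Type*) [AddCommGroup A] (n : ℕ) :
    C G A n →+ C G A (n + 1) :=
  Finsupp.liftAddHom fun g =>
    { toFun := fun a => ∑ h : G, Finsupp.single (Fin.snoc g h) (((-1 : ℤ) ^ (n + 1)) • a)
      map_zero' := by simp
      map_add' := fun a b => by
        simp [smul_add, Finsupp.single_add, Finset.sum_add_distrib] }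

lemma sMap_single (n : ℕ) (g : Fin n → G) (a : A) :
    sMap G A n (Finsupp.single g a) =
      ∑ h : G, Finsupp.single (Fin.snoc g h) (((-1 : ℤ) ^ (n + 1)) • a) := by
  rw [sMap, Finsupp.liftAddHom_apply_single]; rfl

lemma barFace_cc_snoc {n : ℕ} (i : Fin (n + 1)) (g : Fin (n + 1) → G) (h : G) :
    barFace (i.castSucc.castSucc) (Fin.snoc g h) = Fin.snoc (barFace i.castSucc g) h := by
  funext j
  induction j using Fin.lastCases with
  | last =>
      have hi : (i : ℕ) ≤ n := Fin.is_le i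
      simp only [barFace, Fin.coe_castSucc, Fin.val_last, Fin.snoc_last]
      rw [if_neg (by omega), if_neg (by omega), Fin.succ_last, Fin.snoc_last]
  | cast j =>
      simp only [barFace, Fin.coe_castSucc, Fin.snoc_castSucc]
      split_ifs <;> simp [-Fin.castSucc_succ, Fin.succ_castSucc, Fin.snoc_castSucc]

lemma barFace_cl_snoc {n : ℕ} (g : Fin (n + 1) → G) (h : G) :
    barFace ((Fin.last (n + 1)).castSucc) (Fin.snoc g h)
      = Fin.snoc (Fin.init g) (g (Fin.last n) * h) := by
  funext j
  induction j using Fin.lastCases with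
  | last =>
      simp only [barFace, Fin.coe_castSucc, Fin.val_last, Fin.snoc_last]
      rw [if_neg (by omega), if_pos trivial, Fin.succ_last, Fin.snoc_last, Fin.snoc_castSucc]
  | cast j =>
      have hj : (j : ℕ) < n := j.isLt
      simp only [barFace, Fin.coe_castSucc, Fin.val_last, Fin.snoc_castSucc]
      rw [if_pos (by omega)]; rfl

lemma barFace_last_snoc {n : ℕ} (g : Fin (n + 1) → G) (h : G) :
    barFace (Fin.last (n + 2)) (Fin.snoc g h) = g := by
  funext j
  have hj : (j : ℕ) < n + 1 := j.isLt
  simp only [barFace, Fin.val_last]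
  rw [if_pos (by omega), Fin.snoc_castSucc]

lemma barFace_last {n : ℕ} (g : Fin (n + 1) → G) :
    barFace (Fin.last (n + 1)) g = Fin.init g := by
  funext j
  have hj : (j : ℕ) < n := j.isLt
  simp only [barFace, Fin.val_last]
  rw [if_pos (by omega)]; rfl

lemma homotopy_single (n : ℕ) (g : Fin (n + 1) → G) (a : A) :
    barD G A (n + 1) (sMap G A (n + 1) (Finsupp.single g a))
      + sMap G A n (barD G A n (Finsupp.single g a))
      = Fintype.card G • Finsupp.single g a := by
  have hsplit3 : ∀ f : Fin (n + 3) → C G A (n + 1),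
      ∑ i, f i = (∑ i : Fin (n + 1), f i.castSucc.castSucc)
        + f (Fin.last (n + 1)).castSucc + f (Fin.last (n + 2)) := fun f => by
    rw [Fin.sum_univ_castSucc, Fin.sum_univ_castSucc]
  have hsplit2 : ∀ f : Fin (n + 2) → C G A (n + 1),
      ∑ i, f i = (∑ i : Fin (n + 1), f i.castSucc) + f (Fin.last (n + 1)) := fun f => by
    rw [Fin.sum_univ_castSucc]
  rw [sMap_single, map_sum, barD_single, map_sum]
  simp only [barD_single, sMap_single]
  simp only [hsplit3, hsplit2]
  simp only [barFace_cc_snoc, barFace_cl_snoc, barFace_last_snoc, barFace_last,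
    Fin.init_snoc, Fin.coe_castSucc, Fin.val_last, Finset.sum_add_distrib]
  have key1 : (∑ h : G, ∑ i : Fin (n + 1),
        Finsupp.single ((Fin.snoc (barFace i.castSucc g) h : Fin (n+1) → G))
          (((-1 : ℤ) ^ (i : ℕ)) • ((-1 : ℤ) ^ (n + 1 + 1)) • a))
      + ∑ i : Fin (n + 1), ∑ h : G,
        Finsupp.single ((Fin.snoc (barFace i.castSucc g) h : Fin (n+1) → G))
          (((-1 : ℤ) ^ (n + 1)) • ((-1 : ℤ) ^ (i : ℕ)) • a) = 0 := by
    rw [Finset.sum_comm, ← Finset.sum_add_distrib]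
    refine Finset.sum_eq_zero fun i _ => ?_
    rw [← Finset.sum_add_distrib]
    refine Finset.sum_eq_zero fun h _ => ?_
    rw [← Finsupp.single_add, smul_smul, smul_smul, ← add_smul]
    have hco : ((-1 : ℤ) ^ (i : ℕ) * (-1 : ℤ) ^ (n + 1 + 1)
        + (-1 : ℤ) ^ (n + 1) * (-1 : ℤ) ^ (i : ℕ)) = 0 := by
      rw [pow_succ ((-1 : ℤ)) (n + 1)]; ring
    rw [hco, zero_smul, Finsupp.single_zero]
  have key2 : (∑ h : G,
        Finsupp.single ((Fin.snoc (Fin.init g) (g (Fin.last n) * h) : Fin (n+1) → G))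
          (((-1 : ℤ) ^ (n + 1)) • ((-1 : ℤ) ^ (n + 1 + 1)) • a))
      + ∑ h : G, Finsupp.single ((Fin.snoc (Fin.init g) h : Fin (n+1) → G))
          (((-1 : ℤ) ^ (n + 1)) • ((-1 : ℤ) ^ (n + 1)) • a) = 0 := by
    have reidx : (∑ h : G,
          Finsupp.single ((Fin.snoc (Fin.init g) (g (Fin.last n) * h) : Fin (n+1) → G))
            (((-1 : ℤ) ^ (n + 1)) • ((-1 : ℤ) ^ (n + 1 + 1)) • a))
        = ∑ h : G, Finsupp.single ((Fin.snoc (Fin.init g) h : Fin (n+1) → G))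
            (((-1 : ℤ) ^ (n + 1)) • ((-1 : ℤ) ^ (n + 1 + 1)) • a) :=
      Fintype.sum_equiv (Equiv.mulLeft (g (Fin.last n))) _ _ fun h => rfl
    rw [reidx, ← Finset.sum_add_distrib]
    refine Finset.sum_eq_zero fun h _ => ?_
    rw [← Finsupp.single_add, smul_smul, smul_smul, ← add_smul]
    have hco : ((-1 : ℤ) ^ (n + 1) * (-1 : ℤ) ^ (n + 1 + 1)
        + (-1 : ℤ) ^ (n + 1) * (-1 : ℤ) ^ (n + 1)) = 0 := by
      rw [pow_succ ((-1 : ℤ)) (n + 1)]; ring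
    rw [hco, zero_smul, Finsupp.single_zero]
  have key3 : (∑ _h : G,
        Finsupp.single g (((-1 : ℤ) ^ (n + 2)) • ((-1 : ℤ) ^ (n + 1 + 1)) • a))
      = Fintype.card G • Finsupp.single g a := by
    have : ((-1 : ℤ) ^ (n + 2)) • ((-1 : ℤ) ^ (n + 1 + 1)) • a = a := by
      rw [smul_smul, ← pow_add, Even.neg_one_pow ⟨n + 2, by ring⟩, one_smul]
    rw [this, Finset.sum_const, Finset.card_univ]
  have fin : ∀ (A' B' C' D' E' X : C G A (n + 1)), A' + D' = 0 → B' + E' = 0 → C' = X →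
      A' + B' + C' + (D' + E') = X := by
    intro A' B' C' D' E' X h1 h2 h3
    have h4 : A' + B' + C' + (D' + E') = (A' + D') + ((B' + E') + C') := by abel
    rw [h4, h1, h2, zero_add, zero_add, h3]
  exact fin _ _ _ _ _ _ key1 key2 key3

lemma homotopy (n : ℕ) (c : C G A (n + 1)) :
    barD G A (n + 1) (sMap G A (n + 1) c) + sMap G A n (barD G A n c)
      = Fintype.card G • c := by
  have key : (barD G A (n + 1)).comp (sMap G A (n + 1)) + (sMap G A n).comp (barD G A n)
      = Fintype.card G • AddMonoidHom.id (C G A (n + 1)) := by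
    apply Finsupp.addHom_ext
    intro g a
    simp only [AddMonoidHom.add_apply, AddMonoidHom.comp_apply, AddMonoidHom.smul_apply,
      AddMonoidHom.id_apply]
    exact homotopy_single n g a
  have h2 := congrFun (congrArg DFunLike.coe key) c
  simpa using h2

variable {Q : Type*} [Group Q] [Fintype Q] [MulDistribMulAction Q G]

lemma smul_snoc (q : Q) {n : ℕ} (g : Fin n → G) (h : G) :
    (fun j => q • (Fin.snoc g h : Fin (n + 1) → G) j)
      = Fin.snoc (fun j => q • g j) (q • h) := by
  funext j
  induction j using Fin.lastCases with
  | last => simp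
  | cast j => simp

lemma qMap_sMap (q : Q) (n : ℕ) :
    (qMap G A Q q (n + 1)).comp (sMap G A n) = (sMap G A n).comp (qMap G A Q q n) := by
  apply Finsupp.addHom_ext
  intro g a
  rw [AddMonoidHom.comp_apply, AddMonoidHom.comp_apply, sMap_single, map_sum]
  simp only [qMap, chainMapOf_single, sMap_single, MulDistribMulAction.toMonoidHom_apply]
  refine Fintype.sum_equiv (MulAction.toPerm q) _ _ fun h => ?_
  rw [smul_snoc]
  rfl

lemma sMap_mem_invC {Q : Type*} [Group Q] [Fintype Q] [MulDistribMulAction Q G]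
    {n : ℕ} {c : C G A n} (hc : c ∈ invC G A Q n) :
    sMap G A n c ∈ invC G A Q (n + 1) := by
  rw [invC, AddSubgroup.mem_iInf] at hc ⊢
  intro q
  have hq := hc q
  rw [AddMonoidHom.mem_ker, AddMonoidHom.sub_apply, AddMonoidHom.id_apply, sub_eq_zero] at hq ⊢
  rw [← AddMonoidHom.comp_apply, qMap_sMap, AddMonoidHom.comp_apply, hq]

end
end IGC

/-- if `G` is finite, then `H_i^Q(G;A)` is annihilated by `|G|` for all `i > 0`. -/
theorem stmt9 (G : Type*) [Group G] [Fintype G] (A : Type*) [AddCommGroup A]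
    (Q : Type*) [Group Q] [Fintype Q] [MulDistribMulAction Q G] (i : ℕ) (hi : 0 < i)
    (x : IGC.invHomology G A Q i) :
    Fintype.card G • x = 0 := by
  obtain ⟨n, rfl⟩ : ∃ n, i = n + 1 := ⟨i - 1, (Nat.succ_pred_eq_of_pos hi).symm⟩
  refine QuotientAddGroup.induction_on x fun c => ?_
  rw [← QuotientAddGroup.mk'_apply, ← map_nsmul, QuotientAddGroup.mk'_apply,
    QuotientAddGroup.eq_zero_iff, AddSubgroup.mem_addSubgroupOf]
  have hcoe : ((Fintype.card G • c : IGC.invCycles G A Q (n + 1)) : IGC.C G A (n + 1))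
      = Fintype.card G • (c : IGC.C G A (n + 1)) := rfl
  have hmem : (c : IGC.C G A (n + 1)) ∈ IGC.invC G A Q (n + 1) ⊓ IGC.cycles G A (n + 1) := c.2
  rw [AddSubgroup.mem_inf] at hmem
  have hc2 : IGC.barD G A n (c : IGC.C G A (n + 1)) = 0 :=
    AddMonoidHom.mem_ker.mp hmem.2
  have hhom := IGC.homotopy n (c : IGC.C G A (n + 1))
  rw [hc2, map_zero, add_zero] at hhom
  rw [hcoe, ← hhom]
  exact ⟨IGC.sMap G A (n + 1) (c : IGC.C G A (n + 1)), IGC.sMap_mem_invC hmem.1, rfl⟩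
end

section
/- Let Z/2 act on Z by n ↦ -n, Γ = Z/2, X = BZ. Then H^q(X/Γ;Z/2) ≅ Z/2 for all q ≥ 1. -/
namespace Stmt18
open IGC Finsupp

variable {G : Type*} [CommGroup G]

/-- head-scaling of a tuple. -/
def scaleHead {n : ℕ} (c : G) (y : Fin (n + 1) → G) : Fin (n + 1) → G :=
  Function.update y 0 (c * y 0)

lemma scaleHead_zero {n : ℕ} (c : G) (y : Fin (n + 1) → G) : scaleHead c y 0 = c * y 0 := by
  simp [scaleHead]

lemma scaleHead_ne {n : ℕ} (c : G) (y : Fin (n + 1) → G) (j : Fin (n + 1)) (hj : j ≠ 0) :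
    scaleHead c y j = y j := by
  simp [scaleHead, Function.update_of_ne hj]

lemma scaleHead_succ {n : ℕ} (c : G) (y : Fin (n + 1) → G) (j : Fin n) :
    scaleHead c y j.succ = y j.succ :=
  scaleHead_ne c y j.succ (Fin.succ_ne_zero j)

lemma scaleHead_scaleHead {n : ℕ} (c d : G) (y : Fin (n + 1) → G) :
    scaleHead c (scaleHead d y) = scaleHead (c * d) y := by
  funext j
  rcases eq_or_ne j 0 with rfl | hj
  · rw [scaleHead_zero, scaleHead_zero, scaleHead_zero, mul_assoc]
  · rw [scaleHead_ne _ _ _ hj, scaleHead_ne _ _ _ hj, scaleHead_ne _ _ _ hj]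

lemma scaleHead_one {n : ℕ} (y : Fin (n + 1) → G) : scaleHead 1 y = y := by
  funext j
  rcases eq_or_ne j 0 with rfl | hj
  · rw [scaleHead_zero, one_mul]
  · rw [scaleHead_ne _ _ _ hj]

lemma scaleHead_cons_one {n : ℕ} (c : G) (x : Fin n → G) :
    scaleHead c (Fin.cons 1 x) = Fin.cons c x := by
  funext j
  rcases eq_or_ne j 0 with rfl | hj
  · rw [scaleHead_zero]; simp
  · rw [scaleHead_ne _ _ _ hj]
    obtain ⟨m, rfl⟩ := Fin.exists_succ_eq.2 hj
    simp

lemma scaleHead_head_cons_tail {n : ℕ} (y : Fin (n + 1) → G) :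
    scaleHead (y 0) (Fin.cons 1 (Fin.tail y)) = y := by
  rw [scaleHead_cons_one]
  exact Fin.cons_self_tail y

lemma barFace_zero {n : ℕ} (y : Fin (n + 1) → G) :
    barFace (0 : Fin (n + 2)) y = fun t => y t.succ := by
  funext t
  simp [barFace]

lemma barFace_zero_cons_one {n : ℕ} (g : Fin (n + 1) → G) :
    barFace (0 : Fin (n + 3)) (Fin.cons 1 g) = g := by
  rw [barFace_zero]; funext t; simp

lemma barFace_one_cons_one {n : ℕ} (g : Fin (n + 1) → G) :
    barFace (1 : Fin (n + 3)) (Fin.cons 1 g) = g := by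
  have h1 : ((1 : Fin (n + 3)) : ℕ) = 1 := rfl
  funext j
  rcases j.eq_zero_or_eq_succ with rfl | ⟨m, rfl⟩
  · simp only [barFace, h1, Fin.val_zero, Fin.castSucc_zero, Fin.cons_zero, Fin.cons_succ,
      one_mul]
    first
      | rfl
      | (split_ifs <;> first | rfl | omega)
  · simp only [barFace, h1, Fin.val_succ, ← Fin.succ_castSucc, Fin.cons_succ, one_mul]
    first
      | rfl
      | (split_ifs <;> first | rfl | omega)

lemma barFace_succ_succ_cons_one {n : ℕ} (k : Fin (n + 1)) (g : Fin (n + 1) → G) :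
    barFace (k.succ.succ : Fin (n + 3)) (Fin.cons 1 g) = Fin.cons 1 (barFace k.succ g) := by
  funext j
  rcases j.eq_zero_or_eq_succ with rfl | ⟨m, rfl⟩
  · simp only [barFace, Fin.val_succ, Fin.val_zero, Fin.castSucc_zero, Fin.cons_zero]
    first
      | rfl
      | (split_ifs <;> first | rfl | omega)
  · simp only [barFace, Fin.val_succ, Fin.val_zero, ← Fin.succ_castSucc, Fin.cons_succ]
    first
      | rfl
      | (split_ifs <;> first | rfl | omega)

lemma barFace_zero_succ {n : ℕ} (j : Fin (n + 2)) (y : Fin (n + 2) → G) :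
    barFace (0 : Fin (n + 2)) (barFace (j.succ : Fin (n + 3)) y)
      = barFace j (barFace (0 : Fin (n + 3)) y) := by
  funext t
  rw [barFace_zero, barFace_zero]
  simp only [barFace, Fin.val_succ, ← Fin.succ_castSucc]
  first
    | rfl
    | (split_ifs <;> first | rfl | omega)

lemma barFace_succ_scaleHead {n : ℕ} (j : Fin (n + 2)) (c : G) (y : Fin (n + 2) → G) :
    barFace (j.succ : Fin (n + 3)) (scaleHead c y) = scaleHead c (barFace j.succ y) := by
  funext t
  rcases t.eq_zero_or_eq_succ with rfl | ⟨m, rfl⟩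
  · simp only [barFace, Fin.val_succ, Fin.val_zero, Fin.castSucc_zero,
      scaleHead_zero, scaleHead_succ]
    split_ifs with hh1 hh2 <;> simp_all [mul_assoc] <;> omega
  · simp only [barFace, Fin.val_succ, Fin.val_zero, ← Fin.succ_castSucc,
      scaleHead_succ]

end Stmt18
namespace Stmt18
open IGC Finsupp

variable {G : Type*} [CommGroup G]

/-- drop the first entry. -/
noncomputable def piB (n : ℕ) : C G ℤ (n + 1) →+ C G ℤ n :=
  Finsupp.mapDomain.addMonoidHom Fin.tail

/-- prepend the unit. -/
noncomputable def etaB (n : ℕ) : C G ℤ n →+ C G ℤ (n + 1) :=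
  Finsupp.mapDomain.addMonoidHom (fun y : Fin n → G => (Fin.cons 1 y : Fin (n + 1) → G))

/-- translation by `c` (scaling the head). -/
noncomputable def Tmap (n : ℕ) (c : G) : C G ℤ (n + 1) →+ C G ℤ (n + 1) :=
  Finsupp.mapDomain.addMonoidHom (scaleHead c)

/-- the bar-resolution differential. -/
noncomputable def dT (n : ℕ) : C G ℤ (n + 1) →+ C G ℤ n :=
  piB n - barD G ℤ n

lemma piB_single (n : ℕ) (y : Fin (n + 1) → G) (a : ℤ) :
    piB n (Finsupp.single y a) = Finsupp.single (Fin.tail y) a := by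
  rw [piB, Finsupp.mapDomain.addMonoidHom_apply, Finsupp.mapDomain_single]

lemma etaB_single (n : ℕ) (y : Fin n → G) (a : ℤ) :
    etaB n (Finsupp.single y a) = Finsupp.single (Fin.cons 1 y) a := by
  rw [etaB, Finsupp.mapDomain.addMonoidHom_apply, Finsupp.mapDomain_single]

lemma Tmap_single (n : ℕ) (c : G) (y : Fin (n + 1) → G) (a : ℤ) :
    Tmap n c (Finsupp.single y a) = Finsupp.single (scaleHead c y) a := by
  rw [Tmap, Finsupp.mapDomain.addMonoidHom_apply, Finsupp.mapDomain_single]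

lemma Tmap_mul (n : ℕ) (c d : G) (z : C G ℤ (n + 1)) :
    Tmap n c (Tmap n d z) = Tmap n (c * d) z := by
  induction z using Finsupp.induction_linear with
  | zero => simp
  | add f g hf hg => simp [map_add, hf, hg]
  | single y a => rw [Tmap_single, Tmap_single, Tmap_single, scaleHead_scaleHead]

lemma barFace_zero_eq_tail {n : ℕ} (y : Fin (n + 1) → G) :
    barFace (0 : Fin (n + 2)) y = Fin.tail y :=
  barFace_zero y

lemma barD_zero_eq : barD G ℤ 0 = 0 := by
  apply Finsupp.addHom_ext
  intro y a
  rw [barD_single, AddMonoidHom.zero_apply, Fin.sum_univ_two]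
  have h : barFace (0 : Fin 2) y = barFace (1 : Fin 2) y := Subsingleton.elim _ _
  rw [h]
  rw [show ((0 : Fin 2) : ℕ) = 0 from rfl, show ((1 : Fin 2) : ℕ) = 1 from rfl]
  rw [pow_zero, pow_one, one_smul, neg_one_smul, Finsupp.single_neg, add_neg_cancel]

lemma dT_single (n : ℕ) (y : Fin (n + 1) → G) (a : ℤ) :
    dT n (Finsupp.single y a)
      = ∑ k : Fin (n + 1), Finsupp.single (barFace k.succ y) (((-1 : ℤ) ^ (k : ℕ)) • a) := by
  rw [dT, AddMonoidHom.sub_apply, piB_single, barD_single, Fin.sum_univ_succ]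
  rw [show ((0 : Fin (n + 2)) : ℕ) = 0 from rfl, pow_zero, one_smul, barFace_zero_eq_tail]
  have h : ∀ k : Fin (n + 1),
      Finsupp.single (barFace k.succ y) (((-1 : ℤ) ^ ((k.succ : Fin (n+2)) : ℕ)) • a)
        = - Finsupp.single (barFace k.succ y) (((-1 : ℤ) ^ (k : ℕ)) • a) := by
    intro k
    rw [Fin.val_succ, pow_succ, mul_neg_one, neg_smul, Finsupp.single_neg]
  rw [Finset.sum_congr rfl (fun k _ => h k)]
  rw [Finset.sum_neg_distrib]
  abel

lemma barD_comp_etaB (n : ℕ) :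
    (barD G ℤ (n + 1)).comp (etaB (n + 1)) = (etaB n).comp (dT n) := by
  apply Finsupp.addHom_ext
  intro g a
  rw [AddMonoidHom.comp_apply, AddMonoidHom.comp_apply, etaB_single, barD_single, dT_single,
    map_sum]
  rw [Fin.sum_univ_succ, Fin.sum_univ_succ]
  rw [show ((0 : Fin (n + 3)) : ℕ) = 0 from rfl, pow_zero, one_smul, barFace_zero_cons_one]
  rw [show (((0 : Fin (n+2)).succ : Fin (n + 3)) : ℕ) = 1 from rfl, pow_one]
  rw [show ((0 : Fin (n+2)).succ : Fin (n+3)) = (1 : Fin (n+3)) from rfl, barFace_one_cons_one]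
  rw [neg_one_smul, Finsupp.single_neg]
  have h1 : ∀ k : Fin (n + 1),
      Finsupp.single (barFace ((k.succ : Fin (n+2)).succ : Fin (n+3)) (Fin.cons 1 g))
          (((-1 : ℤ) ^ (((k.succ : Fin (n+2)).succ : Fin (n+3)) : ℕ)) • a)
        = Finsupp.single (Fin.cons (1 : G) (barFace k.succ g)) (((-1 : ℤ) ^ (k : ℕ)) • a) := by
    intro k
    rw [barFace_succ_succ_cons_one]
    rw [Fin.val_succ, Fin.val_succ, pow_succ, pow_succ, mul_neg_one, mul_neg_one, neg_neg]
  rw [Finset.sum_congr rfl (fun k _ => h1 k)]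
  have h2 : ∀ k : Fin (n + 1),
      etaB n (Finsupp.single (barFace k.succ g) (((-1 : ℤ) ^ (k : ℕ)) • a))
        = Finsupp.single (Fin.cons (1:G) (barFace k.succ g)) (((-1 : ℤ) ^ (k : ℕ)) • a) :=
    fun k => etaB_single n _ _
  rw [Finset.sum_congr rfl (fun k _ => h2 k)]
  abel

lemma piB_comp_etaB (n : ℕ) : (piB n).comp (etaB n) = AddMonoidHom.id (C G ℤ n) := by
  apply Finsupp.addHom_ext
  intro g a
  rw [AddMonoidHom.comp_apply, etaB_single, piB_single, Fin.tail_cons, AddMonoidHom.id_apply]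

/-- the cone contraction identity for the resolution differential. -/
lemma dT_comp_etaB (n : ℕ) :
    (dT (n + 1)).comp (etaB (n + 1)) = AddMonoidHom.id (C G ℤ (n+1)) - (etaB n).comp (dT n) := by
  rw [dT, AddMonoidHom.sub_comp, piB_comp_etaB, barD_comp_etaB]

lemma piB_comp_barD (n : ℕ) :
    (piB n).comp (barD G ℤ (n + 1))
      = (piB n).comp (piB (n + 1)) - (barD G ℤ n).comp (piB (n + 1)) := by
  apply Finsupp.addHom_ext
  intro y a
  rw [AddMonoidHom.comp_apply, AddMonoidHom.sub_apply, AddMonoidHom.comp_apply,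
    AddMonoidHom.comp_apply, barD_single, map_sum, piB_single, piB_single, barD_single]
  rw [Fin.sum_univ_succ]
  rw [show ((0 : Fin (n + 3)) : ℕ) = 0 from rfl, pow_zero, one_smul, piB_single,
    barFace_zero_eq_tail]
  have h1 : ∀ j : Fin (n + 2),
      piB n (Finsupp.single (barFace (j.succ : Fin (n+3)) y)
          (((-1:ℤ) ^ ((j.succ : Fin (n+3)) : ℕ)) • a))
        = - Finsupp.single (barFace j (Fin.tail y)) (((-1:ℤ) ^ (j : ℕ)) • a) := by
    intro j
    rw [piB_single, ← barFace_zero_eq_tail, barFace_zero_succ, barFace_zero_eq_tail,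
      Fin.val_succ, pow_succ, mul_neg_one, neg_smul, Finsupp.single_neg]
  rw [Finset.sum_congr rfl (fun j _ => h1 j)]
  rw [Finset.sum_neg_distrib]
  abel

lemma piB_comp_dT (n : ℕ) :
    (piB n).comp (dT (n + 1)) = (barD G ℤ n).comp (piB (n + 1)) := by
  rw [dT, AddMonoidHom.comp_sub, piB_comp_barD]
  abel

lemma dT_comp_Tmap (n : ℕ) (c : G) :
    (dT (n + 1)).comp (Tmap (n + 1) c) = (Tmap n c).comp (dT (n + 1)) := by
  apply Finsupp.addHom_ext
  intro y a
  rw [AddMonoidHom.comp_apply, AddMonoidHom.comp_apply, Tmap_single, dT_single, dT_single,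
    map_sum]
  refine Finset.sum_congr rfl fun k _ => ?_
  rw [barFace_succ_scaleHead, Tmap_single]

lemma single_eq_Tmap_etaB (n : ℕ) (y : Fin (n + 1) → G) (a : ℤ) :
    Finsupp.single y a = Tmap n (y 0) (etaB n (Finsupp.single (Fin.tail y) a)) := by
  rw [etaB_single, Tmap_single, scaleHead_head_cons_tail]

lemma dT_comp_dT : ∀ n : ℕ, (dT n).comp (dT (n + 1)) = (0 : C G ℤ (n+2) →+ C G ℤ n)
  | 0 => by
      apply Finsupp.addHom_ext
      intro y a
      have e : ∀ (u : Fin 0 → G) (b : ℤ),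
          (Finsupp.single u b : C G ℤ 0) = Finsupp.single (fun i : Fin 0 => i.elim0) b := by
        intro u b; rw [Subsingleton.elim u (fun i : Fin 0 => i.elim0)]
      rw [AddMonoidHom.comp_apply, AddMonoidHom.zero_apply, dT_single, map_sum]
      have e2 : ∀ k : Fin 2, dT 0 (Finsupp.single (barFace k.succ y) (((-1:ℤ)^(k:ℕ)) • a))
          = Finsupp.single (fun i : Fin 0 => i.elim0) (((-1:ℤ)^(k:ℕ)) • a) := by
        intro k
        rw [dT_single, Fin.sum_univ_one, e]
        rw [show (((0:Fin 1)):ℕ) = 0 from rfl, pow_zero, one_smul]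
      rw [Finset.sum_congr rfl (fun k _ => e2 k), Fin.sum_univ_two]
      rw [show (((0:Fin 2)):ℕ) = 0 from rfl, show (((1:Fin 2)):ℕ) = 1 from rfl, pow_zero,
        pow_one, one_smul, neg_one_smul, Finsupp.single_neg, add_neg_cancel]
  | (n + 1) => by
      apply Finsupp.addHom_ext
      intro y a
      have h1 : (dT (n+1)) ((dT (n+2)) (Finsupp.single y a))
          = Tmap n (y 0) ((dT (n+1)) ((dT (n+2)) ((etaB (n+2)) (Finsupp.single (Fin.tail y) a)))) := by
        rw [single_eq_Tmap_etaB (n+2) y a,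
          ← AddMonoidHom.comp_apply (dT (n+2)) (Tmap (n+2) (y 0)), dT_comp_Tmap,
          AddMonoidHom.comp_apply,
          ← AddMonoidHom.comp_apply (dT (n+1)) (Tmap (n+1) (y 0)), dT_comp_Tmap,
          AddMonoidHom.comp_apply]
      have h2 : (dT (n+2)) ((etaB (n+2)) (Finsupp.single (Fin.tail y) a))
          = Finsupp.single (Fin.tail y) a
            - (etaB (n+1)) ((dT (n+1)) (Finsupp.single (Fin.tail y) a)) := by
        rw [← AddMonoidHom.comp_apply (dT (n+2)) (etaB (n+2)), dT_comp_etaB,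
          AddMonoidHom.sub_apply, AddMonoidHom.id_apply, AddMonoidHom.comp_apply]
      have h3 : (dT (n+1)) (Finsupp.single (Fin.tail y) a
            - (etaB (n+1)) ((dT (n+1)) (Finsupp.single (Fin.tail y) a)))
          = etaB n ((dT n) ((dT (n+1)) (Finsupp.single (Fin.tail y) a))) := by
        rw [map_sub, ← AddMonoidHom.comp_apply (dT (n+1)) (etaB (n+1)), dT_comp_etaB,
          AddMonoidHom.sub_apply, AddMonoidHom.id_apply, AddMonoidHom.comp_apply]
        abel
      rw [AddMonoidHom.comp_apply, AddMonoidHom.zero_apply, h1, h2, h3,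
        ← AddMonoidHom.comp_apply (dT n) (dT (n+1)), dT_comp_dT n, AddMonoidHom.zero_apply,
        map_zero, map_zero]

lemma barD_eq_piB_sub_dT (n : ℕ) : barD G ℤ n = piB n - dT n := by
  rw [dT]; abel

lemma barD_comp_barD (n : ℕ) :
    (barD G ℤ n).comp (barD G ℤ (n + 1)) = 0 := by
  have h1 := piB_comp_barD (G := G) n
  have h2 := dT_comp_dT (G := G) n
  rw [dT, dT, AddMonoidHom.sub_comp, AddMonoidHom.comp_sub, AddMonoidHom.comp_sub, h1] at h2
  abel_nf at h2
  simpa using h2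

end Stmt18
namespace Stmt18
open IGC Finsupp

section Tel
variable {M : Type*} [AddCommGroup M]

/-- discrete primitive: `Tel f b = ∑_{0 ≤ j < b} f j` (with the usual sign convention
for negative `b`). -/
noncomputable def Tel (f : ℤ → M) (b : ℤ) : M :=
  (Finset.range b.toNat).sum (fun k => f k)
    - (Finset.range (-b).toNat).sum (fun k => f (-(k+1)))

lemma Tel_zero (f : ℤ → M) : Tel f 0 = 0 := by
  simp [Tel]

lemma Tel_succ (f : ℤ → M) (b : ℤ) : Tel f (b + 1) = Tel f b + f b := by
  rcases le_or_gt 0 b with h | h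
  · have h1 : (b + 1).toNat = b.toNat + 1 := by omega
    have h2 : (-(b+1)).toNat = 0 := by omega
    have h3 : (-b).toNat = 0 := by omega
    have h4 : ((b.toNat : ℤ)) = b := Int.toNat_of_nonneg h
    rw [Tel, Tel, h1, h2, h3, Finset.range_zero, Finset.sum_empty,
      Finset.sum_range_succ, h4]
    abel
  · have h1 : (b + 1).toNat = 0 := by omega
    have h2 : b.toNat = 0 := by omega
    have h3 : (-b).toNat = (-(b+1)).toNat + 1 := by omega
    have h4 : (((-(b+1)).toNat : ℤ)) = -(b+1) := Int.toNat_of_nonneg (by omega)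
    rw [Tel, Tel, h1, h2, h3, Finset.range_zero, Finset.sum_empty,
      Finset.sum_range_succ]
    rw [show -((((-(b+1)).toNat : ℤ)) + 1) = b by omega]
    abel

lemma Tel_pred (f : ℤ → M) (b : ℤ) : Tel f (b - 1) = Tel f b - f (b - 1) := by
  have h := Tel_succ f (b - 1)
  rw [show b - 1 + 1 = b by ring] at h
  rw [h]
  abel

lemma map_Tel {N : Type*} [AddCommGroup N] (ψ : M →+ N) (f : ℤ → M) (b : ℤ) :
    ψ (Tel f b) = Tel (fun j => ψ (f j)) b := by
  rw [Tel, Tel, map_sub, map_sum, map_sum]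

lemma Tel_congr (f g : ℤ → M) (b : ℤ) (h : ∀ j, f j = g j) : Tel f b = Tel g b := by
  rw [Tel, Tel]
  simp only [h]

lemma Tel_shift (f : ℤ → M) (u v : ℤ) :
    Tel f (u + v) = Tel f u + Tel (fun j => f (u + j)) v := by
  induction v using Int.induction_on with
  | zero => rw [add_zero, Tel_zero, add_zero]
  | succ k ih =>
      rw [show u + ((k:ℤ) + 1) = (u + k) + 1 by ring, Tel_succ, ih, Tel_succ]
      abel
  | pred k ih =>
      rw [show u + (-(k:ℤ) - 1) = (u + -(k:ℤ)) - 1 by ring, Tel_pred,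
        show (-(k:ℤ) - 1) = (-(k:ℤ)) - 1 from rfl, Tel_pred, ih,
        show u + -(k:ℤ) - 1 = u + (-(k:ℤ) - 1) by ring]
      abel

lemma Tel_telescope (F : ℤ → M) (b : ℤ) :
    Tel (fun j => F (j + 1) - F j) b = F b - F 0 := by
  induction b using Int.induction_on with
  | zero => rw [Tel_zero, sub_self]
  | succ k ih => rw [Tel_succ, ih]; abel
  | pred k ih =>
      rw [show (-(k:ℤ) - 1) = (-(k:ℤ)) - 1 from rfl, Tel_pred, ih,
        show -(k:ℤ) - 1 + 1 = -(k:ℤ) by ring]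
      abel

end Tel

abbrev Gz : Type := Multiplicative ℤ

/-- the basis 2-chain `[x|1]`. -/
noncomputable def eSeg (x : ℤ) : C Gz ℤ 2 :=
  Finsupp.single (Fin.cons (Multiplicative.ofAdd x) (fun _ => Multiplicative.ofAdd 1)) 1

/-- the degree-1 correction term `G∘F` of the comparison with the small resolution of `ℤ`:
`t^a[t^b] ↦ ∑_{0≤j<b} t^{a+j}[t]`. -/
noncomputable def GF1 : C Gz ℤ 2 →+ C Gz ℤ 2 :=
  Finsupp.liftAddHom fun y =>
    { toFun := fun a =>
        a • Tel (fun j => eSeg (Multiplicative.toAdd (y 0) + j)) (Multiplicative.toAdd (y 1))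
      map_zero' := zero_smul _ _
      map_add' := fun a b => add_smul a b _ }

lemma GF1_single (y : Fin 2 → Gz) (a : ℤ) :
    GF1 (Finsupp.single y a)
      = a • Tel (fun j => eSeg (Multiplicative.toAdd (y 0) + j)) (Multiplicative.toAdd (y 1)) := by
  rw [GF1, Finsupp.liftAddHom_apply_single]; rfl

lemma tail_scaleHead {G : Type*} [CommGroup G] {n : ℕ} (c : G) (y : Fin (n + 1) → G) :
    Fin.tail (scaleHead c y) = Fin.tail y := by
  funext j
  exact scaleHead_succ c y j

lemma piB_comp_Tmap {G : Type*} [CommGroup G] (n : ℕ) (c : G) :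
    (piB n).comp (Tmap n c) = piB n := by
  apply Finsupp.addHom_ext
  intro y a
  rw [AddMonoidHom.comp_apply, Tmap_single, piB_single, piB_single, tail_scaleHead]

lemma scaleHead_cons {G : Type*} [CommGroup G] {n : ℕ} (c u : G) (v : Fin n → G) :
    scaleHead c (Fin.cons u v) = Fin.cons (c * u) v := by
  funext j
  rcases eq_or_ne j 0 with rfl | hj
  · rw [scaleHead_zero, Fin.cons_zero, Fin.cons_zero]
  · obtain ⟨m, rfl⟩ := Fin.exists_succ_eq.2 hj
    rw [scaleHead_succ, Fin.cons_succ, Fin.cons_succ]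

lemma Tmap_eSeg (c : Gz) (x : ℤ) :
    Tmap 1 c (eSeg x) = eSeg (Multiplicative.toAdd c + x) := by
  rw [eSeg, Tmap_single, scaleHead_cons, eSeg]
  have : c * Multiplicative.ofAdd x = Multiplicative.ofAdd (Multiplicative.toAdd c + x) := by
    rw [ofAdd_add, ofAdd_toAdd]
  rw [this]

lemma GF1_comp_Tmap (c : Gz) :
    GF1.comp (Tmap 1 c) = (Tmap 1 c).comp GF1 := by
  apply Finsupp.addHom_ext
  intro y a
  rw [AddMonoidHom.comp_apply, AddMonoidHom.comp_apply, Tmap_single, GF1_single, GF1_single,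
    map_zsmul, map_Tel]
  rw [scaleHead_zero]
  rw [scaleHead_ne c y 1 (by decide)]
  congr 1
  apply Tel_congr
  intro j
  rw [Tmap_eSeg]
  congr 1
  rw [toAdd_mul]
  ring

lemma face_pair_mul (y : Fin 2 → Gz) :
    barFace ((0 : Fin 2).succ) y = fun _ : Fin 1 => y 0 * y 1 := by
  funext j
  have hj : j = 0 := Subsingleton.elim j 0
  subst hj
  simp [barFace, show ((0 : Fin 2).succ : ℕ) = 1 from rfl, Fin.castSucc_zero]

lemma face_pair_fst (y : Fin 2 → Gz) :
    barFace ((1 : Fin 2).succ) y = fun _ : Fin 1 => y 0 := by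
  funext j
  have hj : j = 0 := Subsingleton.elim j 0
  subst hj
  simp [barFace, show ((1 : Fin 2).succ : ℕ) = 2 from rfl, Fin.castSucc_zero]

/-- dT on a 2-chain `[u|v]` is `[uv] - [u]`. -/
lemma dT_pair (y : Fin 2 → Gz) (a : ℤ) :
    dT 1 (Finsupp.single y a)
      = Finsupp.single (fun _ : Fin 1 => y 0 * y 1) a
        - Finsupp.single (fun _ : Fin 1 => y 0) a := by
  rw [dT_single, Fin.sum_univ_two, face_pair_mul, face_pair_fst]
  rw [show (((0 : Fin 2)) : ℕ) = 0 from rfl, show (((1 : Fin 2)) : ℕ) = 1 from rfl,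
    pow_zero, pow_one, one_smul, neg_one_smul, Finsupp.single_neg]
  abel

lemma dT_eSeg (x : ℤ) :
    dT 1 (eSeg x)
      = Finsupp.single (fun _ : Fin 1 => Multiplicative.ofAdd (x + 1)) (1:ℤ)
        - Finsupp.single (fun _ : Fin 1 => Multiplicative.ofAdd x) (1:ℤ) := by
  rw [eSeg, dT_pair]
  rw [Fin.cons_zero, show ((1 : Fin 2)) = (0 : Fin 1).succ from rfl, Fin.cons_succ]
  rw [← ofAdd_add]

lemma dT_comp_GF1 : (dT 1).comp GF1 = dT 1 := by
  apply Finsupp.addHom_ext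
  intro y a
  set α := Multiplicative.toAdd (y 0) with hα
  set β := Multiplicative.toAdd (y 1) with hβ
  set F : ℤ → C Gz ℤ 1 :=
    fun t => Finsupp.single (fun _ : Fin 1 => Multiplicative.ofAdd (α + t)) (1:ℤ) with hF
  rw [AddMonoidHom.comp_apply, GF1_single, map_zsmul, map_Tel]
  have h1 : ∀ j : ℤ, dT 1 (eSeg (α + j)) = F (j + 1) - F j := by
    intro j
    rw [dT_eSeg, hF]
    rw [show α + j + 1 = α + (j + 1) by ring]
  rw [Tel_congr _ _ _ h1, Tel_telescope, dT_pair]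
  have hmul : (fun _ : Fin 1 => Multiplicative.ofAdd (α + β)) = (fun _ : Fin 1 => y 0 * y 1) := by
    funext t; rw [ofAdd_add, hα, hβ, ofAdd_toAdd, ofAdd_toAdd]
  have hfst : (fun _ : Fin 1 => Multiplicative.ofAdd (α + 0)) = (fun _ : Fin 1 => y 0) := by
    funext t; rw [add_zero, hα, ofAdd_toAdd]
  rw [smul_sub, hF]
  rw [Finsupp.smul_single, Finsupp.smul_single, smul_eq_mul, mul_one, hmul, hfst]

lemma GF1_comp_dT : GF1.comp (dT 2) = 0 := by
  apply Finsupp.addHom_ext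
  intro y a
  rw [AddMonoidHom.comp_apply, AddMonoidHom.zero_apply, dT_single, map_sum, Fin.sum_univ_three]
  have e0 : (barFace ((0 : Fin 3).succ) y) 0 = y 0 * y 1 := by
    simp [barFace, show (((0:Fin 3).succ) : ℕ) = 1 from rfl]
  have e0' : (barFace ((0 : Fin 3).succ) y) 1 = y 2 := by
    simp [barFace, show (((0:Fin 3).succ) : ℕ) = 1 from rfl]
  have e1 : (barFace ((1 : Fin 3).succ) y) 0 = y 0 := by
    simp [barFace, show (((1:Fin 3).succ) : ℕ) = 2 from rfl]
  have e1' : (barFace ((1 : Fin 3).succ) y) 1 = y 1 * y 2 := by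
    simp [barFace, show (((1:Fin 3).succ) : ℕ) = 2 from rfl]
  have e2 : (barFace ((2 : Fin 3).succ) y) 0 = y 0 := by
    simp [barFace, show (((2:Fin 3).succ) : ℕ) = 3 from rfl]
  have e2' : (barFace ((2 : Fin 3).succ) y) 1 = y 1 := by
    simp [barFace, show (((2:Fin 3).succ) : ℕ) = 3 from rfl]
  rw [GF1_single, GF1_single, GF1_single, e0, e0', e1, e1', e2, e2']
  rw [show (((0:Fin 3)) : ℕ) = 0 from rfl, show (((1:Fin 3)) : ℕ) = 1 from rfl,
    show (((2:Fin 3)) : ℕ) = 2 from rfl]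
  rw [pow_zero, pow_one, one_smul, neg_one_smul]
  set α := Multiplicative.toAdd (y 0)
  set β := Multiplicative.toAdd (y 1)
  set γ := Multiplicative.toAdd (y 2)
  have hα : Multiplicative.toAdd (y 0 * y 1) = α + β := by rw [toAdd_mul]
  have hβ : Multiplicative.toAdd (y 1 * y 2) = β + γ := by rw [toAdd_mul]
  rw [hα, hβ]
  rw [show ((-1:ℤ)^2) = 1 by norm_num, one_smul]
  rw [Tel_shift (fun j => eSeg (α + j)) β γ]
  have : ∀ j : ℤ, eSeg (α + (β + j)) = eSeg (α + β + j) := by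
    intro j; rw [show α + (β + j) = α + β + j by ring]
  rw [Tel_congr _ _ _ this]
  rw [neg_smul, smul_add]
  abel

end Stmt18
namespace Stmt18
open IGC Finsupp

/-- one step of the comparison homotopy. -/
noncomputable def hstep {n : ℕ} (w : C Gz ℤ (n + 1) →+ C Gz ℤ (n + 1)) :
    C Gz ℤ (n + 1) →+ C Gz ℤ (n + 2) :=
  Finsupp.liftAddHom fun y =>
    AddMonoidHom.comp (Tmap (n + 1) (y 0))
      ((etaB (n + 1)).comp (w.comp (Finsupp.singleAddHom (Fin.cons 1 (Fin.tail y)))))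

lemma hstep_single {n : ℕ} (w : C Gz ℤ (n + 1) →+ C Gz ℤ (n + 1)) (y : Fin (n + 1) → Gz)
    (a : ℤ) :
    hstep w (Finsupp.single y a)
      = Tmap (n + 1) (y 0)
          (etaB (n + 1) (w (Finsupp.single (Fin.cons 1 (Fin.tail y)) a))) := by
  rw [hstep, Finsupp.liftAddHom_apply_single, AddMonoidHom.comp_apply, AddMonoidHom.comp_apply,
    AddMonoidHom.comp_apply, Finsupp.singleAddHom_apply]

/-- the comparison homotopy for the bar resolution of `ℤ`. -/
noncomputable def hB : (n : ℕ) → (C Gz ℤ (n + 1) →+ C Gz ℤ (n + 2))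
  | 0 => 0
  | 1 => hstep (AddMonoidHom.id (C Gz ℤ 2) - GF1)
  | (n + 2) => hstep (AddMonoidHom.id (C Gz ℤ (n + 3)) - (hB (n + 1)).comp (dT (n + 2)))

lemma hB_one : hB 1 = hstep (AddMonoidHom.id (C Gz ℤ 2) - GF1) := rfl

lemma hB_succ_succ (n : ℕ) :
    hB (n + 2) = hstep (AddMonoidHom.id (C Gz ℤ (n + 3)) - (hB (n + 1)).comp (dT (n + 2))) := rfl

lemma hstep_comp_Tmap {n : ℕ} (w : C Gz ℤ (n + 1) →+ C Gz ℤ (n + 1)) (c : Gz) :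
    (hstep w).comp (Tmap n c) = (Tmap (n + 1) c).comp (hstep w) := by
  apply Finsupp.addHom_ext
  intro y a
  rw [AddMonoidHom.comp_apply, AddMonoidHom.comp_apply, Tmap_single, hstep_single,
    hstep_single, scaleHead_zero, tail_scaleHead, ← Tmap_mul]

lemma hB_comp_Tmap (n : ℕ) (c : Gz) :
    (hB n).comp (Tmap n c) = (Tmap (n + 1) c).comp (hB n) := by
  match n with
  | 0 =>
      rw [show hB 0 = 0 from rfl, AddMonoidHom.zero_comp, AddMonoidHom.comp_zero]
  | 1 => rw [hB_one, hstep_comp_Tmap]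
  | (n + 2) => rw [hB_succ_succ, hstep_comp_Tmap]

/-- central computation: `dT ∘ hstep w = w` whenever `dT ∘ w = 0` and `w` is equivariant. -/
lemma dT_comp_hstep {n : ℕ} (w : C Gz ℤ (n + 2) →+ C Gz ℤ (n + 2))
    (hw : ∀ z, dT (n + 1) (w z) = 0)
    (hcomm : ∀ (c : Gz) (z), Tmap (n + 1) c (w z) = w (Tmap (n + 1) c z)) :
    (dT (n + 2)).comp (hstep w) = w := by
  apply Finsupp.addHom_ext
  intro y a
  rw [AddMonoidHom.comp_apply, hstep_single,
    ← AddMonoidHom.comp_apply (dT (n + 2)) (Tmap (n + 2) (y 0)), dT_comp_Tmap,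
    AddMonoidHom.comp_apply,
    ← AddMonoidHom.comp_apply (dT (n + 2)) (etaB (n + 2)), dT_comp_etaB,
    AddMonoidHom.sub_apply, AddMonoidHom.id_apply, AddMonoidHom.comp_apply, hw, map_zero,
    sub_zero, hcomm, Tmap_single, scaleHead_head_cons_tail]

lemma dT_comp_hB_one :
    (dT 2).comp (hB 1) = AddMonoidHom.id (C Gz ℤ 2) - GF1 := by
  rw [hB_one]
  apply dT_comp_hstep
  · intro z
    rw [AddMonoidHom.sub_apply, AddMonoidHom.id_apply, map_sub,
      ← AddMonoidHom.comp_apply (dT 1) GF1, dT_comp_GF1, sub_self]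
  · intro c z
    rw [AddMonoidHom.sub_apply, AddMonoidHom.sub_apply, AddMonoidHom.id_apply,
      AddMonoidHom.id_apply, map_sub, ← AddMonoidHom.comp_apply (Tmap 1 c) GF1,
      ← GF1_comp_Tmap, AddMonoidHom.comp_apply]

lemma dT_comp_hB : ∀ n : ℕ,
    (dT (n + 3)).comp (hB (n + 2))
      = AddMonoidHom.id (C Gz ℤ (n + 3)) - (hB (n + 1)).comp (dT (n + 2))
  | 0 => by
      rw [hB_succ_succ]
      apply dT_comp_hstep
      · intro z
        rw [AddMonoidHom.sub_apply, AddMonoidHom.id_apply, map_sub, AddMonoidHom.comp_apply,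
          ← AddMonoidHom.comp_apply (dT 2) (hB 1), dT_comp_hB_one, AddMonoidHom.sub_apply,
          AddMonoidHom.id_apply, ← AddMonoidHom.comp_apply GF1 (dT 2), GF1_comp_dT,
          AddMonoidHom.zero_apply, sub_zero, sub_self]
      · intro c z
        rw [AddMonoidHom.sub_apply, AddMonoidHom.sub_apply, AddMonoidHom.id_apply,
          AddMonoidHom.id_apply, map_sub, AddMonoidHom.comp_apply, AddMonoidHom.comp_apply,
          ← AddMonoidHom.comp_apply (Tmap 2 c) (hB 1), ← hB_comp_Tmap,
          AddMonoidHom.comp_apply, ← AddMonoidHom.comp_apply (Tmap 1 c) (dT 2),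
          ← dT_comp_Tmap, AddMonoidHom.comp_apply]
  | (n + 1) => by
      rw [hB_succ_succ]
      apply dT_comp_hstep
      · intro z
        rw [AddMonoidHom.sub_apply, AddMonoidHom.id_apply, map_sub, AddMonoidHom.comp_apply,
          ← AddMonoidHom.comp_apply (dT (n + 3)) (hB (n + 2)), dT_comp_hB n,
          AddMonoidHom.sub_apply, AddMonoidHom.id_apply, AddMonoidHom.comp_apply,
          ← AddMonoidHom.comp_apply (dT (n + 2)) (dT (n + 3)), dT_comp_dT,
          AddMonoidHom.zero_apply, map_zero, sub_zero, sub_self]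
      · intro c z
        rw [AddMonoidHom.sub_apply, AddMonoidHom.sub_apply, AddMonoidHom.id_apply,
          AddMonoidHom.id_apply, map_sub, AddMonoidHom.comp_apply, AddMonoidHom.comp_apply,
          ← AddMonoidHom.comp_apply (Tmap (n + 3) c) (hB (n + 2)), ← hB_comp_Tmap,
          AddMonoidHom.comp_apply, ← AddMonoidHom.comp_apply (Tmap (n + 2) c) (dT (n + 3)),
          ← dT_comp_Tmap, AddMonoidHom.comp_apply]

/-- the homotopy on the (trivial-coefficient) bar complex of `ℤ`. -/
noncomputable def hbar : (n : ℕ) → (C Gz ℤ n →+ C Gz ℤ (n + 1))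
  | 0 => 0
  | (m + 1) => (piB (m + 2)).comp ((hB (m + 1)).comp (etaB (m + 1)))

lemma hbar_succ (m : ℕ) :
    hbar (m + 1) = (piB (m + 2)).comp ((hB (m + 1)).comp (etaB (m + 1))) := rfl

/-- the key fact: `π ∘ hB` ignores the head. -/
lemma piB_hB_head (n : ℕ) (y : Fin (n + 2) → Gz) (a : ℤ) :
    piB (n + 2) (hB (n + 1) (Finsupp.single y a))
      = piB (n + 2) (hB (n + 1) (Finsupp.single (Fin.cons 1 (Fin.tail y)) a)) := by
  have h1 : Finsupp.single y a
      = Tmap (n + 1) (y 0) (Finsupp.single (Fin.cons 1 (Fin.tail y)) a) := by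
    rw [Tmap_single, scaleHead_head_cons_tail]
  rw [h1, ← AddMonoidHom.comp_apply (hB (n + 1)) (Tmap (n + 1) (y 0)), hB_comp_Tmap,
    AddMonoidHom.comp_apply, ← AddMonoidHom.comp_apply (piB (n + 2)) (Tmap (n + 2) (y 0)),
    piB_comp_Tmap]

/-- the homotopy identity for the bar complex of `ℤ` in degrees `≥ 2`. -/
lemma barD_homotopy (n : ℕ) :
    (barD Gz ℤ (n + 2)).comp (hbar (n + 2)) + (hbar (n + 1)).comp (barD Gz ℤ (n + 1))
      = AddMonoidHom.id (C Gz ℤ (n + 2)) := by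
  apply Finsupp.addHom_ext
  intro y a
  rw [AddMonoidHom.add_apply, AddMonoidHom.comp_apply, AddMonoidHom.comp_apply,
    AddMonoidHom.id_apply, hbar_succ, hbar_succ]
  rw [AddMonoidHom.comp_apply, AddMonoidHom.comp_apply]
  rw [AddMonoidHom.comp_apply, AddMonoidHom.comp_apply]
  -- first summand
  have e1 : barD Gz ℤ (n + 2) (piB (n + 3) (hB (n + 2) (etaB (n + 2) (Finsupp.single y a))))
      = piB (n + 2) (dT (n + 3) (hB (n + 2) (etaB (n + 2) (Finsupp.single y a)))) := by
    rw [← AddMonoidHom.comp_apply (barD Gz ℤ (n + 2)) (piB (n + 3)), ← piB_comp_dT,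
      AddMonoidHom.comp_apply]
  rw [e1, ← AddMonoidHom.comp_apply (dT (n + 3)) (hB (n + 2)), dT_comp_hB,
    AddMonoidHom.sub_apply, AddMonoidHom.id_apply, AddMonoidHom.comp_apply]
  rw [← AddMonoidHom.comp_apply (dT (n + 2)) (etaB (n + 2)), dT_comp_etaB,
    AddMonoidHom.sub_apply, AddMonoidHom.id_apply, AddMonoidHom.comp_apply]
  rw [map_sub, map_sub, map_sub]
  -- expose the three pieces
  -- piece : piB (etaB z) = z
  have e2 : piB (n + 2) (etaB (n + 2) (Finsupp.single y a)) = Finsupp.single y a := by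
    rw [← AddMonoidHom.comp_apply (piB (n + 2)) (etaB (n + 2)), piB_comp_etaB,
      AddMonoidHom.id_apply]
  rw [e2]
  -- piece : piB (hB (single y a)) = piB (hB (etaB (piB (single y a))))
  have e3 : piB (n + 2) (hB (n + 1) (Finsupp.single y a))
      = piB (n + 2) (hB (n + 1) (etaB (n + 1) (piB (n + 1) (Finsupp.single y a)))) := by
    rw [piB_single, etaB_single, piB_hB_head]
  -- the dT + barD = piB relation
  have e4 : dT (n + 1) (Finsupp.single y a) + barD Gz ℤ (n + 1) (Finsupp.single y a)
      = piB (n + 1) (Finsupp.single y a) := by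
    rw [dT, AddMonoidHom.sub_apply]
    abel
  have e5 : hB (n + 1) (etaB (n + 1) (dT (n + 1) (Finsupp.single y a)))
        + hB (n + 1) (etaB (n + 1) (barD Gz ℤ (n + 1) (Finsupp.single y a)))
      = hB (n + 1) (etaB (n + 1) (piB (n + 1) (Finsupp.single y a))) := by
    rw [← map_add, ← map_add, e4]
  -- assemble
  rw [e3]
  have e6 : piB (n + 2) (hB (n + 1) (etaB (n + 1) (dT (n + 1) (Finsupp.single y a))))
        + piB (n + 2) (hB (n + 1) (etaB (n + 1) (barD Gz ℤ (n + 1) (Finsupp.single y a))))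
      = piB (n + 2) (hB (n + 1) (etaB (n + 1) (piB (n + 1) (Finsupp.single y a)))) := by
    rw [← map_add, e5]
  rw [← e6]
  abel

end Stmt18
namespace Stmt18
open IGC Finsupp Multiplicative

noncomputable section
open Classical

/-- the involution on chains induced by inversion. -/
def tauC (n : ℕ) : C Gz ℤ n →+ C Gz ℤ n := qMap Gz ℤ ℤˣ (-1) n

/-- pointwise inversion of tuples. -/
def invp {n : ℕ} (x : Fin n → Gz) : Fin n → Gz := fun j => (x j)⁻¹

lemma neg_one_smul_Gz (g : Gz) : ((-1 : ℤˣ) • g) = g⁻¹ := by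
  show g ^ (((-1 : ℤˣ) : ℤ)) = g⁻¹
  rw [Units.val_neg, Units.val_one, zpow_neg_one]

lemma tauC_single {n : ℕ} (x : Fin n → Gz) (a : ℤ) :
    tauC n (Finsupp.single x a) = Finsupp.single (invp x) a := by
  rw [tauC, qMap, chainMapOf_single]
  congr 1
  funext j
  rw [invp, MulDistribMulAction.toMonoidHom_apply, neg_one_smul_Gz]

lemma tauC_tauC {n : ℕ} (z : C Gz ℤ n) : tauC n (tauC n z) = z := by
  induction z using Finsupp.induction_linear with
  | zero => simp
  | add f g hf hg => rw [map_add, map_add, hf, hg]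
  | single x a =>
      rw [tauC_single, tauC_single]
      congr 1
      funext j
      rw [invp, invp, inv_inv]

lemma tauC_barD (n : ℕ) :
    (barD Gz ℤ n).comp (tauC (n + 1)) = (tauC n).comp (barD Gz ℤ n) :=
  chainMapOf_barD Gz ℤ _ n

lemma qMap_one_eq (n : ℕ) : qMap Gz ℤ ℤˣ (1 : ℤˣ) n = AddMonoidHom.id _ := by
  apply Finsupp.addHom_ext
  intro x a
  rw [qMap, chainMapOf_single, AddMonoidHom.id_apply]
  congr 1
  funext j
  show (1 : ℤˣ) • x j = x j
  rw [one_smul]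

lemma mem_W_sub (n : ℕ) (z : C Gz ℤ n) : tauC n z - z ∈ W Gz ℤ ℤˣ n := by
  have h : (qMap Gz ℤ ℤˣ (-1) n - AddMonoidHom.id (C Gz ℤ n)).range ≤ W Gz ℤ ℤˣ n :=
    le_iSup (fun u : ℤˣ => (qMap Gz ℤ ℤˣ u n - AddMonoidHom.id (C Gz ℤ n)).range) (-1 : ℤˣ)
  exact h ⟨z, rfl⟩

lemma vanishing_iff_even (n : ℕ) (φ : Cochain Gz n) :
    φ ∈ vanishing Gz n (W Gz ℤ ℤˣ n) ↔ ∀ z, φ (tauC n z) = φ z := by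
  constructor
  · intro h z
    have h2 := h _ (mem_W_sub n z)
    rw [map_sub] at h2
    linear_combination h2
  · intro h c hc
    have hW : W Gz ℤ ℤˣ n ≤ φ.ker := by
      apply iSup_le
      intro u
      rcases Int.units_eq_one_or u with rfl | rfl
      · intro c hc
        obtain ⟨z, rfl⟩ := hc
        rw [AddMonoidHom.mem_ker, AddMonoidHom.sub_apply, qMap_one_eq, AddMonoidHom.id_apply,
          sub_self, map_zero]
      · intro c hc
        obtain ⟨z, rfl⟩ := hc
        rw [AddMonoidHom.mem_ker, AddMonoidHom.sub_apply, AddMonoidHom.id_apply, map_sub]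
        rw [show qMap Gz ℤ ℤˣ (-1) n z = tauC n z from rfl, h z, sub_self]
    exact hW hc

/-- the trivial (fixed) tuple. -/
def oneT (n : ℕ) : Fin n → Gz := fun _ => 1

lemma invp_oneT (n : ℕ) : invp (oneT n) = oneT n := by
  funext j
  rw [invp, oneT, inv_one]

lemma invp_eq_self_iff {n : ℕ} (x : Fin n → Gz) : invp x = x ↔ x = oneT n := by
  constructor
  · intro h
    funext j
    have hj := congrFun h j
    rw [invp] at hj
    have : Multiplicative.toAdd (x j) = 0 := by
      have := congrArg Multiplicative.toAdd hj
      simp only [toAdd_inv] at this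
      omega
    show x j = 1
    have := congrArg Multiplicative.ofAdd this
    rw [ofAdd_toAdd] at this
    exact this
  · intro h
    rw [h, invp_oneT]

/-- canonical orbit representatives: first nontrivial entry is positive. -/
def canon {n : ℕ} (x : Fin n → Gz) : Prop :=
  ∃ hs : (Finset.univ.filter fun j => x j ≠ 1).Nonempty,
    0 < Multiplicative.toAdd (x ((Finset.univ.filter fun j => x j ≠ 1).min' hs))

lemma canon_oneT (n : ℕ) : ¬ canon (oneT n) := by
  rintro ⟨hs, -⟩
  obtain ⟨j, hj⟩ := hs
  rw [Finset.mem_filter] at hj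
  exact hj.2 rfl

lemma filter_invp {n : ℕ} (x : Fin n → Gz) :
    (Finset.univ.filter fun j => invp x j ≠ 1) = (Finset.univ.filter fun j => x j ≠ 1) := by
  apply Finset.filter_congr
  intro j _
  rw [invp]
  simp [inv_eq_one]

lemma canon_invp {n : ℕ} (x : Fin n → Gz) (hx : x ≠ oneT n) :
    canon (invp x) ↔ ¬ canon x := by
  have hs : (Finset.univ.filter fun j => x j ≠ 1).Nonempty := by
    by_contra h
    apply hx
    funext j
    by_contra hj
    exact h ⟨j, Finset.mem_filter.2 ⟨Finset.mem_univ j, hj⟩⟩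
  have hs' : (Finset.univ.filter fun j => invp x j ≠ 1).Nonempty := by
    rw [filter_invp]; exact hs
  have hmin : (Finset.univ.filter fun j => invp x j ≠ 1).min' hs'
      = (Finset.univ.filter fun j => x j ≠ 1).min' hs := by
    congr 1
    exact filter_invp x
  have hne : Multiplicative.toAdd (x ((Finset.univ.filter fun j => x j ≠ 1).min' hs)) ≠ 0 := by
    have hmem := Finset.min'_mem _ hs
    rw [Finset.mem_filter] at hmem
    intro h0
    apply hmem.2
    have := congrArg Multiplicative.ofAdd h0
    rw [ofAdd_toAdd] at this
    exact this
  constructor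
  · rintro ⟨hs2, hpos⟩ ⟨hs3, hpos3⟩
    rw [hmin] at hpos
    rw [invp, toAdd_inv] at hpos
    omega
  · intro h
    refine ⟨hs', ?_⟩
    rw [hmin, invp, toAdd_inv]
    have : ¬ (0 < Multiplicative.toAdd (x ((Finset.univ.filter fun j => x j ≠ 1).min' hs))) := by
      intro hp
      exact h ⟨hs, hp⟩
    omega

/-- selection of canonical representatives. -/
def Psel (n : ℕ) : C Gz ℤ n →+ C Gz ℤ n :=
  Finsupp.liftAddHom fun x =>
    if canon x then Finsupp.singleAddHom x else 0

lemma Psel_single {n : ℕ} (x : Fin n → Gz) (a : ℤ) :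
    Psel n (Finsupp.single x a) = if canon x then Finsupp.single x a else 0 := by
  rw [Psel, Finsupp.liftAddHom_apply_single]
  split_ifs with h
  · rfl
  · rfl

lemma cochain_single_smul {n : ℕ} (φ : Cochain Gz n) (x : Fin n → Gz) (a : ℤ) :
    φ (Finsupp.single x a) = a • φ (Finsupp.single x (1:ℤ)) := by
  rw [show (Finsupp.single x a : C Gz ℤ n) = a • Finsupp.single x (1:ℤ) by
      rw [Finsupp.smul_single, smul_eq_mul, mul_one],
    map_zsmul]

/-- the splitting identity for the norm. -/
lemma sSplit {n : ℕ} (φ : Cochain Gz n) (heven : ∀ z, φ (tauC n z) = φ z)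
    (hfix : φ (Finsupp.single (oneT n) 1) = 0) (z : C Gz ℤ n) :
    φ (Psel n z) + φ (Psel n (tauC n z)) = φ z := by
  induction z using Finsupp.induction_linear with
  | zero => simp
  | add f g hf hg =>
      simp only [map_add]
      rw [← hf, ← hg]
      abel
  | single x a =>
      rw [tauC_single]
      by_cases hx : x = oneT n
      · subst hx
        rw [invp_oneT, Psel_single, if_neg (canon_oneT n), map_zero,
          cochain_single_smul φ (oneT n) a, hfix, smul_zero, add_zero]
      · by_cases hc : canon x
        · have hnc : ¬ canon (invp x) := by
            rw [canon_invp x hx]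
            intro h'
            exact h' hc
          rw [Psel_single, Psel_single, if_pos hc, if_neg hnc, map_zero, add_zero]
        · have hnc : canon (invp x) := (canon_invp x hx).2 hc
          rw [Psel_single, Psel_single, if_neg hc, if_pos hnc, map_zero, zero_add,
            ← tauC_single, heven]

/-- evaluation at the trivial tuple. -/
def sigmaC (n : ℕ) : Cochain Gz n :=
  (Int.castAddHom (ZMod 2)).comp (Finsupp.applyAddHom (oneT n))

lemma sigmaC_single {n : ℕ} (x : Fin n → Gz) (a : ℤ) :
    sigmaC n (Finsupp.single x a) = if x = oneT n then (a : ZMod 2) else 0 := by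
  rw [sigmaC, AddMonoidHom.comp_apply, Finsupp.applyAddHom_apply, Finsupp.single_apply]
  split_ifs with h
  · rfl
  · exact map_zero _

lemma sigmaC_even (n : ℕ) : sigmaC n ∈ vanishing Gz n (W Gz ℤ ℤˣ n) := by
  rw [vanishing_iff_even]
  intro z
  induction z using Finsupp.induction_linear with
  | zero => simp
  | add f g hf hg => rw [map_add, map_add, map_add, hf, hg]
  | single x a =>
      rw [tauC_single, sigmaC_single, sigmaC_single]
      have hiff : (invp x = oneT n) ↔ (x = oneT n) := by
        constructor
        · intro h
          have h2 : invp (invp x) = invp (oneT n) := by rw [h]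
          rw [invp_oneT] at h2
          rw [← h2]
          funext j
          rw [invp, invp, inv_inv]
        · intro h
          rw [h, invp_oneT]
      split_ifs with h1 h2 h3 <;> first
        | rfl
        | (exact absurd (hiff.1 h1) h2)
        | (exact absurd (hiff.2 h3) h1)

lemma barFace_oneT (n : ℕ) (i : Fin (n + 2)) : barFace i (oneT (n + 1)) = oneT n := by
  funext t
  rw [barFace, oneT]
  split_ifs <;> simp [oneT]

lemma neg_one_pow_sum (m : ℕ) :
    (∑ i : Fin m, ((-1 : ℤ)) ^ (i : ℕ)) = if m % 2 = 1 then 1 else 0 := by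
  induction m with
  | zero => simp
  | succ k ih =>
      rw [Fin.sum_univ_castSucc]
      simp only [Fin.coe_castSucc, Fin.val_last] at *
      rw [ih]
      rcases Nat.even_or_odd k with he | ho
      · rw [he.neg_one_pow]
        have h1 : k % 2 = 0 := Nat.even_iff.1 he
        have h2 : (k+1) % 2 = 1 := by omega
        rw [if_neg (by omega), if_pos h2]
        ring
      · rw [ho.neg_one_pow]
        have h1 : k % 2 = 1 := Nat.odd_iff.1 ho
        have h2 : ¬ ((k+1) % 2 = 1) := by omega
        rw [if_pos h1, if_neg h2]
        ring

lemma barD_oneT (n : ℕ) :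
    barD Gz ℤ n (Finsupp.single (oneT (n + 1)) 1)
      = Finsupp.single (oneT n) (if n % 2 = 1 then (1:ℤ) else 0) := by
  rw [barD_single]
  have h : ∀ i : Fin (n + 2),
      Finsupp.single (barFace i (oneT (n+1))) (((-1:ℤ)) ^ (i:ℕ) • (1:ℤ))
        = Finsupp.singleAddHom (M := ℤ) (oneT n) (((-1:ℤ)) ^ (i:ℕ)) := by
    intro i
    rw [barFace_oneT, smul_eq_mul, mul_one, Finsupp.singleAddHom_apply]
  rw [Finset.sum_congr rfl (fun i _ => h i), ← map_sum, neg_one_pow_sum,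
    Finsupp.singleAddHom_apply]
  have h2 : (n + 2) % 2 = n % 2 := by omega
  rw [h2]

end
end Stmt18
namespace Stmt18
open IGC Finsupp Multiplicative

noncomputable section
open Classical

/-- coboundary operator. -/
def δop (m : ℕ) : Cochain Gz m →+ Cochain Gz (m + 1) := precomp Gz (barD Gz ℤ m)

lemma δop_apply (m : ℕ) (φ : Cochain Gz m) : δop m φ = φ.comp (barD Gz ℤ m) := rfl

lemma δop_δop (m : ℕ) (φ : Cochain Gz m) : δop (m + 1) (δop m φ) = 0 := by
  rw [δop_apply, δop_apply, AddMonoidHom.comp_assoc, barD_comp_barD, AddMonoidHom.comp_zero]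

/-- restriction to canonical representatives. -/
def sOp (m : ℕ) : Cochain Gz m →+ Cochain Gz m := precomp Gz (Psel m)

lemma sOp_apply (m : ℕ) (φ : Cochain Gz m) (z : C Gz ℤ m) : sOp m φ z = φ (Psel m z) := rfl

/-- the involution on cochains. -/
def tauOp (m : ℕ) : Cochain Gz m →+ Cochain Gz m := precomp Gz (tauC m)

lemma tauOp_apply (m : ℕ) (φ : Cochain Gz m) (z : C Gz ℤ m) : tauOp m φ z = φ (tauC m z) := rfl

lemma tauOp_tauOp (m : ℕ) (φ : Cochain Gz m) : tauOp m (tauOp m φ) = φ := by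
  refine AddMonoidHom.ext fun z => ?_
  rw [tauOp_apply, tauOp_apply, tauC_tauC]

lemma tauOp_δop (m : ℕ) (φ : Cochain Gz m) :
    tauOp (m + 1) (δop m φ) = δop m (tauOp m φ) := by
  refine AddMonoidHom.ext fun z => ?_
  rw [tauOp_apply, δop_apply, δop_apply, AddMonoidHom.comp_apply, AddMonoidHom.comp_apply,
    tauOp_apply, ← AddMonoidHom.comp_apply (barD Gz ℤ m) (tauC (m+1)), tauC_barD,
    AddMonoidHom.comp_apply]

lemma even_iff_tauOp (m : ℕ) (φ : Cochain Gz m) :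
    φ ∈ vanishing Gz m (W Gz ℤ ℤˣ m) ↔ tauOp m φ = φ := by
  rw [vanishing_iff_even]
  constructor
  · intro h
    refine AddMonoidHom.ext fun z => ?_
    rw [tauOp_apply, h]
  · intro h z
    have := DFunLike.congr_fun h z
    rw [tauOp_apply] at this
    exact this

lemma even_δop {m : ℕ} {φ : Cochain Gz m} (h : φ ∈ vanishing Gz m (W Gz ℤ ℤˣ m)) :
    δop m φ ∈ vanishing Gz (m + 1) (W Gz ℤ ℤˣ (m + 1)) := by
  rw [even_iff_tauOp] at h ⊢
  rw [tauOp_δop, h]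

/-- evaluation at the trivial tuple, as a homomorphism on cochains. -/
def fixEv (m : ℕ) : Cochain Gz m →+ ZMod 2 :=
  AddMonoidHom.mk' (fun φ => φ (Finsupp.single (oneT m) 1)) (fun f g => rfl)

lemma fixEv_apply (m : ℕ) (φ : Cochain Gz m) : fixEv m φ = φ (Finsupp.single (oneT m) 1) := rfl

lemma zmod2_neg : ∀ r : ZMod 2, -r = r := by decide

lemma zmod2_two : ∀ r : ZMod 2, r + r = 0 := by decide

lemma cochain_neg {m : ℕ} (φ : Cochain Gz m) : -φ = φ := by
  refine AddMonoidHom.ext fun z => ?_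
  rw [AddMonoidHom.neg_apply, zmod2_neg]

lemma cochain_two {m : ℕ} (φ : Cochain Gz m) : φ + φ = 0 := by
  refine AddMonoidHom.ext fun z => ?_
  rw [AddMonoidHom.add_apply, zmod2_two, AddMonoidHom.zero_apply]

/-- the splitting of an even cochain vanishing at the trivial tuple. -/
lemma sOp_split {m : ℕ} (φ : Cochain Gz m) (heven : φ ∈ vanishing Gz m (W Gz ℤ ℤˣ m))
    (hfix : fixEv m φ = 0) :
    sOp m φ + tauOp m (sOp m φ) = φ := by
  refine AddMonoidHom.ext fun z => ?_
  rw [AddMonoidHom.add_apply, tauOp_apply, sOp_apply, sOp_apply]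
  exact sSplit φ ((vanishing_iff_even m φ).1 heven) hfix z

lemma fixEv_δop (m : ℕ) (ψ : Cochain Gz m) :
    fixEv (m + 1) (δop m ψ)
      = (if m % 2 = 1 then (1:ℤ) else 0) • fixEv m ψ := by
  rw [fixEv_apply, δop_apply, AddMonoidHom.comp_apply, barD_oneT, fixEv_apply,
    cochain_single_smul]

lemma tauC_oneT (m : ℕ) (a : ℤ) :
    tauC m (Finsupp.single (oneT m) a) = Finsupp.single (oneT m) a := by
  rw [tauC_single, invp_oneT]

/-- degree-1 additivity from the cocycle condition. -/
def sing1 (n : ℤ) : C Gz ℤ 1 := Finsupp.single (fun _ : Fin 1 => Multiplicative.ofAdd n) 1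

lemma cochain1_eval (φ : Cochain Gz 1) (x : Fin 1 → Gz) (a : ℤ) :
    φ (Finsupp.single x a) = a • φ (sing1 (Multiplicative.toAdd (x 0))) := by
  have hx : (fun _ : Fin 1 => Multiplicative.ofAdd (Multiplicative.toAdd (x 0))) = x := by
    funext j
    have hj : j = 0 := Subsingleton.elim j 0
    rw [hj, ofAdd_toAdd]
  rw [cochain_single_smul, sing1, hx]

lemma cocycle1_add (u : Cochain Gz 1) (hu : δop 1 u = 0) (s t : ℤ) :
    u (sing1 (s + t)) = u (sing1 s) + u (sing1 t) := by
  set y : Fin 2 → Gz := fun j => if j = 0 then Multiplicative.ofAdd s else Multiplicative.ofAdd t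
    with hy
  have h := DFunLike.congr_fun hu (Finsupp.single y 1)
  rw [δop_apply, AddMonoidHom.comp_apply, AddMonoidHom.zero_apply, barD_single,
    Fin.sum_univ_three] at h
  rw [show ((0 : Fin 3) : ℕ) = 0 from rfl, show ((1 : Fin 3) : ℕ) = 1 from rfl,
    show ((2 : Fin 3) : ℕ) = 2 from rfl, pow_zero, pow_one,
    show ((-1:ℤ))^2 = 1 by norm_num, one_smul, neg_one_smul,
    Finsupp.single_neg] at h
  rw [show (1 : Fin 3) = ((0 : Fin 2).succ : Fin 3) from rfl] at h
  rw [show (2 : Fin 3) = ((1 : Fin 2).succ : Fin 3) from rfl] at h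
  rw [barFace_zero, face_pair_mul, face_pair_fst] at h
  rw [map_add, map_add, map_neg] at h
  have hy0 : y 0 = Multiplicative.ofAdd s := by rw [hy]; simp
  have hy1 : y 1 = Multiplicative.ofAdd t := by rw [hy]; simp
  have e1 : (Finsupp.single (fun _ : Fin 1 => y 1) (1:ℤ)) = sing1 t := by
    rw [sing1, hy1]
  have e2 : (Finsupp.single (fun _ : Fin 1 => y 0 * y 1) (1:ℤ)) = sing1 (s + t) := by
    rw [sing1, hy0, hy1, ← ofAdd_add]
  have e3 : (Finsupp.single (fun t : Fin 1 => y t.succ) (1:ℤ)) = sing1 t := by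
    have harg : (fun t : Fin 1 => y t.succ) = (fun _ : Fin 1 => Multiplicative.ofAdd t) := by
      funext j
      have hj : j = 0 := Subsingleton.elim j 0
      rw [hj, show ((0 : Fin 1).succ : Fin 2) = 1 from rfl, hy1]
    rw [sing1, harg]
  have e4 : (Finsupp.single (fun _ : Fin 1 => y 0) (1:ℤ)) = sing1 s := by
    rw [sing1, hy0]
  rw [e2, e3, e4] at h
  have := h
  linear_combination -this

lemma cocycle1_zero (u : Cochain Gz 1) (hu : δop 1 u = 0) : u (sing1 0) = 0 := by
  have h := cocycle1_add u hu 0 0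
  rw [add_zero] at h
  exact left_eq_add.mp h

lemma cocycle1_neg (u : Cochain Gz 1) (hu : δop 1 u = 0) (t : ℤ) :
    u (sing1 (-t)) = u (sing1 t) := by
  have h := cocycle1_add u hu t (-t)
  rw [add_neg_cancel, cocycle1_zero u hu] at h
  have h2 : u (sing1 (-t)) = - u (sing1 t) :=
    eq_neg_of_add_eq_zero_right h.symm
  rw [h2, zmod2_neg]

/-- a degree-1 cocycle plus its involute vanishes. -/
lemma cocycle1_add_tau (u : Cochain Gz 1) (hu : δop 1 u = 0) :
    u + tauOp 1 u = 0 := by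
  apply Finsupp.addHom_ext
  intro x a
  rw [AddMonoidHom.add_apply, AddMonoidHom.zero_apply, tauOp_apply, tauC_single]
  rw [cochain1_eval u x a, cochain1_eval u (invp x) a]
  rw [show Multiplicative.toAdd (invp x 0) = - Multiplicative.toAdd (x 0) by
    rw [invp]; exact toAdd_inv _]
  rw [cocycle1_neg u hu]
  rw [← smul_add, zmod2_two, smul_zero]

lemma cocycle1_smul (u : Cochain Gz 1) (hu : δop 1 u = 0) (t : ℤ) :
    u (sing1 t) = t • u (sing1 1) := by
  induction t using Int.induction_on with
  | zero => rw [cocycle1_zero u hu, zero_smul]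
  | succ k ih => rw [cocycle1_add u hu k 1, ih, add_smul, one_smul]
  | pred k ih =>
      have h := cocycle1_add u hu (-(k:ℤ)) (-1)
      rw [show (-(k:ℤ)) + (-1) = -(k:ℤ) - 1 by ring] at h
      rw [h, ih, cocycle1_neg u hu 1, sub_smul, one_smul, sub_eq_add_neg, zmod2_neg]

end
end Stmt18
namespace Stmt18
open IGC Finsupp Multiplicative

noncomputable section
open Classical

/-- acyclicity of the full cochain complex in degrees `≥ 2`. -/
lemma M_acyclic (n : ℕ) (Φ : Cochain Gz (n + 2)) (hΦ : δop (n + 2) Φ = 0) :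
    δop (n + 1) (Φ.comp (hbar (n + 1))) = Φ := by
  have h := congrArg (fun F : C Gz ℤ (n + 2) →+ C Gz ℤ (n + 2) => Φ.comp F) (barD_homotopy n)
  simp only [AddMonoidHom.comp_add] at h
  rw [δop_apply] at hΦ
  rw [← AddMonoidHom.comp_assoc, ← AddMonoidHom.comp_assoc, hΦ, AddMonoidHom.zero_comp,
    zero_add, AddMonoidHom.comp_id] at h
  rw [δop_apply, AddMonoidHom.comp_assoc]
  -- h : (Φ.comp (hbar (n+1))).comp (barD (n+1)) = Φ  (up to assoc)
  rw [← AddMonoidHom.comp_assoc]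
  exact h

/-- the parity cochain in degree 1. -/
def parity1 : Cochain Gz 1 :=
  Finsupp.liftAddHom fun x =>
    { toFun := fun a => (a : ZMod 2) * ((Multiplicative.toAdd (x 0) : ℤ) : ZMod 2)
      map_zero' := by push_cast; ring
      map_add' := fun a b => by push_cast; ring }

lemma parity1_single (x : Fin 1 → Gz) (a : ℤ) :
    parity1 (Finsupp.single x a)
      = (a : ZMod 2) * ((Multiplicative.toAdd (x 0) : ℤ) : ZMod 2) := by
  rw [parity1, Finsupp.liftAddHom_apply_single]; rfl

lemma parity1_even : parity1 ∈ vanishing Gz 1 (W Gz ℤ ℤˣ 1) := by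
  rw [vanishing_iff_even]
  intro z
  induction z using Finsupp.induction_linear with
  | zero => simp
  | add f g hf hg => rw [map_add, map_add, map_add, hf, hg]
  | single x a =>
      rw [tauC_single, parity1_single, parity1_single]
      rw [show Multiplicative.toAdd (invp x 0) = - Multiplicative.toAdd (x 0) by
        rw [invp]; exact toAdd_inv _]
      rw [Int.cast_neg, mul_neg, zmod2_neg]

lemma parity1_cocycle : δop 1 parity1 = 0 := by
  apply Finsupp.addHom_ext
  intro y a
  rw [δop_apply, AddMonoidHom.comp_apply, AddMonoidHom.zero_apply, barD_single,
    Fin.sum_univ_three]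
  rw [show ((0 : Fin 3) : ℕ) = 0 from rfl, show ((1 : Fin 3) : ℕ) = 1 from rfl,
    show ((2 : Fin 3) : ℕ) = 2 from rfl, pow_zero, pow_one,
    show ((-1:ℤ))^2 = 1 by norm_num, one_smul, neg_one_smul, Finsupp.single_neg]
  rw [show (1 : Fin 3) = ((0 : Fin 2).succ : Fin 3) from rfl,
    show (2 : Fin 3) = ((1 : Fin 2).succ : Fin 3) from rfl,
    barFace_zero, face_pair_mul, face_pair_fst]
  rw [map_add, map_add, map_neg, parity1_single, parity1_single, parity1_single]
  rw [toAdd_mul, Int.cast_add]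
  rw [show ((0 : Fin 1).succ : Fin 2) = (1 : Fin 2) from rfl]
  ring

lemma parity1_at_one : parity1 (sing1 1) = 1 := by
  rw [sing1, parity1_single]
  norm_num

/-- every degree-1 coboundary vanishes. -/
lemma cob1_zero : ∀ φ ∈ quotCoboundaries Gz ℤˣ 1, φ = 0 := by
  rintro φ ⟨ψ, -, rfl⟩
  rw [show barDFrom Gz ℤ 1 = barD Gz ℤ 0 from rfl]
  show ψ.comp (barD Gz ℤ 0) = 0
  rw [barD_zero_eq, AddMonoidHom.comp_zero]

/-- the evaluation character on degree-1 cocycles. -/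
def evalH1 : quotCocycles Gz ℤˣ 1 →+ ZMod 2 :=
  AddMonoidHom.mk' (fun φ => (φ : Cochain Gz 1) (sing1 1)) (fun f g => rfl)

lemma parity1_mem : parity1 ∈ quotCocycles Gz ℤˣ 1 := by
  show parity1 ∈ vanishing Gz 1 (W Gz ℤ ℤˣ 1) ⊓ (precomp Gz (barD Gz ℤ 1)).ker
  rw [AddSubgroup.mem_inf]
  exact ⟨parity1_even, AddMonoidHom.mem_ker.2 parity1_cocycle⟩

/-- `H¹ ≃ ℤ/2`. -/
def equivBase : quotCohomology Gz ℤˣ 1 ≃+ ZMod 2 := by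
  refine AddEquiv.ofBijective
    (QuotientAddGroup.lift _ evalH1 ?_) ⟨?_, ?_⟩
  · intro x hx
    rw [AddSubgroup.mem_addSubgroupOf] at hx
    have h0 : (x : Cochain Gz 1) = 0 := cob1_zero _ hx
    show (x : Cochain Gz 1) (sing1 1) = 0
    rw [h0, AddMonoidHom.zero_apply]
  · -- injective
    rw [injective_iff_map_eq_zero]
    intro c hc
    induction c using QuotientAddGroup.induction_on with
    | H x =>
        have hx : (x : Cochain Gz 1) (sing1 1) = 0 := hc
        have hcoc : δop 1 (x : Cochain Gz 1) = 0 := by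
          have h2 : (x : Cochain Gz 1) ∈ vanishing Gz 1 (W Gz ℤ ℤˣ 1)
              ⊓ (precomp Gz (barD Gz ℤ 1)).ker := x.2
          rw [AddSubgroup.mem_inf] at h2
          exact AddMonoidHom.mem_ker.1 h2.2
        have hzero : (x : Cochain Gz 1) = 0 := by
          apply Finsupp.addHom_ext
          intro x' a
          rw [cochain1_eval _ x' a, cocycle1_smul _ hcoc, hx, smul_zero, smul_zero,
            AddMonoidHom.zero_apply]
        have hx0 : x = 0 := Subtype.ext hzero
        rw [hx0]
        rfl
  · -- surjective
    intro b
    have hb : b = 0 ∨ b = 1 := by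
      revert b; decide
    rcases hb with rfl | rfl
    · exact ⟨0, map_zero _⟩
    · refine ⟨QuotientAddGroup.mk ⟨parity1, parity1_mem⟩, ?_⟩
      show evalH1 ⟨parity1, parity1_mem⟩ = 1
      show parity1 (sing1 1) = 1
      exact parity1_at_one

end
end Stmt18
namespace Stmt18
open IGC Finsupp Multiplicative

noncomputable section
open Classical

/-- cocycles that moreover vanish at the trivial tuple. -/
def Z0 (q : ℕ) : AddSubgroup (Cochain Gz q) := quotCocycles Gz ℤˣ q ⊓ (fixEv q).ker

/-- coboundaries of even cochains vanishing at the trivial tuple. -/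
def B0 (k : ℕ) : AddSubgroup (Cochain Gz (k + 1)) :=
  ((vanishing Gz k (W Gz ℤ ℤˣ k)) ⊓ (fixEv k).ker).map (δop k)

abbrev H0 (k : ℕ) : Type _ := Z0 (k + 1) ⧸ ((B0 k).addSubgroupOf (Z0 (k + 1)))

lemma mem_quotCocycles_iff (q : ℕ) (φ : Cochain Gz q) :
    φ ∈ quotCocycles Gz ℤˣ q ↔
      φ ∈ vanishing Gz q (W Gz ℤ ℤˣ q) ∧ δop q φ = 0 := by
  show φ ∈ vanishing Gz q (W Gz ℤ ℤˣ q) ⊓ (precomp Gz (barD Gz ℤ q)).ker ↔ _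
  rw [AddSubgroup.mem_inf]
  exact and_congr_right fun _ => AddMonoidHom.mem_ker

lemma mem_quotCoboundaries_succ (k : ℕ) (φ : Cochain Gz (k + 1)) :
    φ ∈ quotCoboundaries Gz ℤˣ (k + 1) ↔
      ∃ ψ ∈ vanishing Gz k (W Gz ℤ ℤˣ k), δop k ψ = φ := by
  show φ ∈ (vanishing Gz k (W Gz ℤ ℤˣ k)).map (δop k) ↔ _
  rw [AddSubgroup.mem_map]

lemma mem_Z0_iff (q : ℕ) (φ : Cochain Gz q) :
    φ ∈ Z0 q ↔ (φ ∈ vanishing Gz q (W Gz ℤ ℤˣ q) ∧ δop q φ = 0) ∧ fixEv q φ = 0 := by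
  rw [Z0, AddSubgroup.mem_inf, mem_quotCocycles_iff]
  exact and_congr_right fun _ => AddMonoidHom.mem_ker

lemma mem_B0_iff (k : ℕ) (φ : Cochain Gz (k + 1)) :
    φ ∈ B0 k ↔ ∃ ψ, (ψ ∈ vanishing Gz k (W Gz ℤ ℤˣ k) ∧ fixEv k ψ = 0) ∧ δop k ψ = φ := by
  rw [B0, AddSubgroup.mem_map]
  constructor
  · rintro ⟨ψ, hψ, rfl⟩
    rw [AddSubgroup.mem_inf] at hψ
    exact ⟨ψ, ⟨hψ.1, AddMonoidHom.mem_ker.1 hψ.2⟩, rfl⟩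
  · rintro ⟨ψ, ⟨h1, h2⟩, rfl⟩
    exact ⟨ψ, AddSubgroup.mem_inf.2 ⟨h1, AddMonoidHom.mem_ker.2 h2⟩, rfl⟩

lemma fixEv_sigmaC (k : ℕ) : fixEv k (sigmaC k) = 1 := by
  rw [fixEv_apply, sigmaC_single, if_pos rfl, Int.cast_one]

lemma zmod2_cases : ∀ r : ZMod 2, r = 0 ∨ r = 1 := by decide

lemma cochain_sub_eq_add {m : ℕ} (f g : Cochain Gz m) : f - g = f + g := by
  rw [sub_eq_add_neg, cochain_neg]

/-! ### the first isomorphism : `H0 k ≃ H^(k+1)` -/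

def homA (k : ℕ) : (Z0 (k + 1)) →+ quotCohomology Gz ℤˣ (k + 1) :=
  (QuotientAddGroup.mk' _).comp (AddSubgroup.inclusion (inf_le_left : Z0 (k+1) ≤ _))

lemma homA_ker (k : ℕ) : ∀ x ∈ (B0 k).addSubgroupOf (Z0 (k + 1)), homA k x = 0 := by
  intro x hx
  rw [AddSubgroup.mem_addSubgroupOf] at hx
  show QuotientAddGroup.mk (AddSubgroup.inclusion inf_le_left x)
      = (0 : quotCohomology Gz ℤˣ (k+1))
  rw [QuotientAddGroup.eq_zero_iff]
  rw [AddSubgroup.mem_addSubgroupOf, mem_quotCoboundaries_succ]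
  obtain ⟨ψ, ⟨h1, _⟩, h3⟩ := (mem_B0_iff k _).1 hx
  exact ⟨ψ, h1, h3⟩

def barA (k : ℕ) : H0 k →+ quotCohomology Gz ℤˣ (k + 1) :=
  QuotientAddGroup.lift _ (homA k) (homA_ker k)

lemma fixEv_of_cocycle {k : ℕ} (φ : Cochain Gz (k + 1)) (hodd : k % 2 = 0)
    (hcoc : δop (k + 1) φ = 0) : fixEv (k + 1) φ = 0 := by
  have h := DFunLike.congr_fun hcoc (Finsupp.single (oneT (k + 2)) 1)
  rw [δop_apply, AddMonoidHom.comp_apply, AddMonoidHom.zero_apply, barD_oneT,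
    if_pos (by omega : (k + 1) % 2 = 1)] at h
  rw [fixEv_apply]
  exact h

lemma surjA (k : ℕ) : Function.Surjective (barA k) := by
  intro c
  induction c using QuotientAddGroup.induction_on with
  | H φs =>
      obtain ⟨heven, hcoc⟩ := (mem_quotCocycles_iff (k + 1) φs).1 φs.2
      rcases Nat.even_or_odd k with hk | hk
      · -- k even : fixEv is automatically zero
        have hfix : fixEv (k + 1) (φs : Cochain Gz (k + 1)) = 0 :=
          fixEv_of_cocycle _ (Nat.even_iff.1 hk) hcoc
        refine ⟨QuotientAddGroup.mk
          ⟨(φs : Cochain Gz (k + 1)), (mem_Z0_iff _ _).2 ⟨⟨heven, hcoc⟩, hfix⟩⟩, ?_⟩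
        show QuotientAddGroup.mk (AddSubgroup.inclusion inf_le_left _) = QuotientAddGroup.mk φs
        congr 1
      · -- k odd
        have hk1 : k % 2 = 1 := Nat.odd_iff.1 hk
        rcases zmod2_cases (fixEv (k + 1) (φs : Cochain Gz (k + 1))) with hfix | hfix
        · refine ⟨QuotientAddGroup.mk
            ⟨(φs : Cochain Gz (k + 1)), (mem_Z0_iff _ _).2 ⟨⟨heven, hcoc⟩, hfix⟩⟩, ?_⟩
          show QuotientAddGroup.mk (AddSubgroup.inclusion inf_le_left _) = QuotientAddGroup.mk φs
          congr 1
        · -- correct by the coboundary of σ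
          set ψ : Cochain Gz (k + 1) := (φs : Cochain Gz (k + 1)) + δop k (sigmaC k) with hψ
          have hψeven : ψ ∈ vanishing Gz (k + 1) (W Gz ℤ ℤˣ (k + 1)) :=
            AddSubgroup.add_mem _ heven (even_δop (sigmaC_even k))
          have hψcoc : δop (k + 1) ψ = 0 := by
            rw [hψ, map_add, hcoc, δop_δop, add_zero]
          have hψfix : fixEv (k + 1) ψ = 0 := by
            rw [hψ, map_add, hfix, fixEv_δop, if_pos hk1, fixEv_sigmaC, one_smul]
            decide
          refine ⟨QuotientAddGroup.mk
            ⟨ψ, (mem_Z0_iff _ _).2 ⟨⟨hψeven, hψcoc⟩, hψfix⟩⟩, ?_⟩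
          show QuotientAddGroup.mk (AddSubgroup.inclusion inf_le_left _) = QuotientAddGroup.mk φs
          rw [QuotientAddGroup.eq_iff_sub_mem]
          rw [AddSubgroup.mem_addSubgroupOf, AddSubgroup.coe_sub]
          rw [mem_quotCoboundaries_succ]
          refine ⟨sigmaC k, sigmaC_even k, ?_⟩
          show (δop k) (sigmaC k) = ((φs : Cochain Gz (k+1)) + (δop k) (sigmaC k)) - ↑φs
          abel

lemma injA (k : ℕ) : Function.Injective (barA k) := by
  rw [injective_iff_map_eq_zero]
  intro c hc
  induction c using QuotientAddGroup.induction_on with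
  | H z =>
      have hz : (z : Cochain Gz (k + 1)) ∈ quotCoboundaries Gz ℤˣ (k + 1) := by
        have h0 : homA k z = 0 := hc
        have h1 : QuotientAddGroup.mk (AddSubgroup.inclusion (inf_le_left : Z0 (k+1) ≤ _) z)
            = (0 : quotCohomology Gz ℤˣ (k+1)) := h0
        rw [QuotientAddGroup.eq_zero_iff, AddSubgroup.mem_addSubgroupOf] at h1
        exact h1
      obtain ⟨⟨hzeven, hzcoc⟩, hzfix⟩ := (mem_Z0_iff _ _).1 z.2
      rw [mem_quotCoboundaries_succ] at hz
      obtain ⟨ψ, hψeven, hψδ⟩ := hz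
      show QuotientAddGroup.mk z = 0
      rw [QuotientAddGroup.eq_zero_iff, AddSubgroup.mem_addSubgroupOf, mem_B0_iff]
      match k with
      | 0 =>
          refine ⟨0, ⟨AddSubgroup.zero_mem _, map_zero _⟩, ?_⟩
          rw [map_zero]
          rw [← hψδ, δop_apply, barD_zero_eq, AddMonoidHom.comp_zero]
      | (k' + 1) =>
          have hfixδ : fixEv (k' + 2) (δop (k' + 1) ψ) = 0 := by
            rw [hψδ]
            exact hzfix
          rw [fixEv_δop] at hfixδ
          rcases Nat.even_or_odd (k' + 1) with hk | hk
          · -- k'+1 even, so k' odd : correct ψ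
            have hk'odd : k' % 2 = 1 := by
              have := Nat.even_iff.1 hk; omega
            rcases zmod2_cases (fixEv (k' + 1) ψ) with hf | hf
            · exact ⟨ψ, ⟨hψeven, hf⟩, hψδ⟩
            · refine ⟨ψ + δop k' (sigmaC k'), ⟨AddSubgroup.add_mem _ hψeven
                (even_δop (sigmaC_even k')), ?_⟩, ?_⟩
              · rw [map_add, hf, fixEv_δop, if_pos hk'odd, fixEv_sigmaC, one_smul]
                decide
              · rw [map_add, δop_δop, add_zero, hψδ]
          · -- k'+1 odd : forced
            have h1 : (k' + 1) % 2 = 1 := Nat.odd_iff.1 hk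
            rw [if_pos h1, one_smul] at hfixδ
            exact ⟨ψ, ⟨hψeven, hfixδ⟩, hψδ⟩

def equivA (k : ℕ) : H0 k ≃+ quotCohomology Gz ℤˣ (k + 1) :=
  AddEquiv.ofBijective (barA k) ⟨injA k, surjA k⟩

end
end Stmt18
namespace Stmt18
open IGC Finsupp Multiplicative

noncomputable section
open Classical

lemma tau_sOp {q : ℕ} (φ : Cochain Gz q) (heven : φ ∈ vanishing Gz q (W Gz ℤ ℤˣ q))
    (hfix : fixEv q φ = 0) :
    tauOp q (sOp q φ) = φ - sOp q φ := by
  have h := sOp_split φ heven hfix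
  exact eq_sub_of_add_eq' h

def toK2 (k : ℕ) : Z0 (k + 1) →+ Cochain Gz (k + 2) :=
  (δop (k + 1)).comp ((sOp (k + 1)).comp (Z0 (k + 1)).subtype)

lemma toK2_apply (k : ℕ) (φ : Z0 (k + 1)) :
    toK2 k φ = δop (k + 1) (sOp (k + 1) (φ : Cochain Gz (k + 1))) := rfl

lemma toK2_mem (k : ℕ) (φ : Z0 (k + 1)) : toK2 k φ ∈ quotCocycles Gz ℤˣ (k + 2) := by
  obtain ⟨⟨heven, hcoc⟩, hfix⟩ := (mem_Z0_iff _ _).1 φ.2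
  rw [mem_quotCocycles_iff]
  constructor
  · rw [even_iff_tauOp, toK2_apply, tauOp_δop, tau_sOp _ heven hfix, map_sub, hcoc, zero_sub,
      cochain_neg]
  · rw [toK2_apply, δop_δop]

def homB (k : ℕ) : Z0 (k + 1) →+ quotCohomology Gz ℤˣ (k + 2) :=
  (QuotientAddGroup.mk' _).comp
    ((toK2 k).codRestrict (quotCocycles Gz ℤˣ (k + 2)) (toK2_mem k))

lemma homB_ker (k : ℕ) : ∀ x ∈ (B0 k).addSubgroupOf (Z0 (k + 1)), homB k x = 0 := by
  intro x hx
  rw [AddSubgroup.mem_addSubgroupOf] at hx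
  obtain ⟨β, ⟨hβeven, hβfix⟩, hβδ⟩ := (mem_B0_iff k _).1 hx
  obtain ⟨⟨hxeven, hxcoc⟩, hxfix⟩ := (mem_Z0_iff _ _).1 x.2
  show QuotientAddGroup.mk ((toK2 k).codRestrict _ (toK2_mem k) x)
      = (0 : quotCohomology Gz ℤˣ (k + 2))
  rw [QuotientAddGroup.eq_zero_iff, AddSubgroup.mem_addSubgroupOf]
  rw [show (((toK2 k).codRestrict _ (toK2_mem k) x : quotCocycles Gz ℤˣ (k+2)) : Cochain Gz (k+2))
      = toK2 k x from rfl]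
  rw [mem_quotCoboundaries_succ]
  refine ⟨sOp (k + 1) (x : Cochain Gz (k+1)) + δop k (sOp k β), ?_, ?_⟩
  · rw [even_iff_tauOp, map_add, tau_sOp _ hxeven hxfix, tauOp_δop, tau_sOp β hβeven hβfix,
      map_sub, hβδ, cochain_sub_eq_add, cochain_sub_eq_add]
    rw [show ((x : Cochain Gz (k+1)) + sOp (k+1) (x : Cochain Gz (k+1)))
          + ((x : Cochain Gz (k+1)) + δop k (sOp k β))
        = ((x : Cochain Gz (k+1)) + (x : Cochain Gz (k+1)))
          + (sOp (k+1) (x : Cochain Gz (k+1)) + δop k (sOp k β)) from by abel,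
      cochain_two, zero_add]
  · rw [map_add, δop_δop, add_zero, toK2_apply]

def barB (k : ℕ) : H0 k →+ quotCohomology Gz ℤˣ (k + 2) :=
  QuotientAddGroup.lift _ (homB k) (homB_ker k)

lemma surjB (k : ℕ) : Function.Surjective (barB k) := by
  intro c
  induction c using QuotientAddGroup.induction_on with
  | H Φs =>
      obtain ⟨hΦeven, hΦcoc⟩ := (mem_quotCocycles_iff _ _).1 Φs.2
      have hδΨ : δop (k + 1) ((Φs : Cochain Gz (k+2)).comp (hbar (k + 1))) = Φs :=
        M_acyclic k _ hΦcoc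
      set Ψ : Cochain Gz (k + 1) := (Φs : Cochain Gz (k+2)).comp (hbar (k + 1))
      have hφeven : Ψ + tauOp (k + 1) Ψ ∈ vanishing Gz (k+1) (W Gz ℤ ℤˣ (k+1)) := by
        rw [even_iff_tauOp, map_add, tauOp_tauOp]
        exact add_comm _ _
      have hφcoc : δop (k + 1) (Ψ + tauOp (k + 1) Ψ) = 0 := by
        rw [map_add, hδΨ, ← tauOp_δop, hδΨ, (even_iff_tauOp _ _).1 hΦeven, cochain_two]
      have hφfix : fixEv (k + 1) (Ψ + tauOp (k + 1) Ψ) = 0 := by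
        rw [map_add, fixEv_apply, fixEv_apply, tauOp_apply, tauC_oneT, zmod2_two]
      refine ⟨QuotientAddGroup.mk
        ⟨Ψ + tauOp (k + 1) Ψ, (mem_Z0_iff _ _).2 ⟨⟨hφeven, hφcoc⟩, hφfix⟩⟩, ?_⟩
      show QuotientAddGroup.mk ((toK2 k).codRestrict _ (toK2_mem k) _)
          = QuotientAddGroup.mk Φs
      rw [QuotientAddGroup.eq_iff_sub_mem, AddSubgroup.mem_addSubgroupOf, AddSubgroup.coe_sub]
      rw [show (((toK2 k).codRestrict _ (toK2_mem k)
            ⟨Ψ + tauOp (k + 1) Ψ, (mem_Z0_iff _ _).2 ⟨⟨hφeven, hφcoc⟩, hφfix⟩⟩ :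
            quotCocycles Gz ℤˣ (k+2)) : Cochain Gz (k+2))
          = δop (k + 1) (sOp (k + 1) (Ψ + tauOp (k + 1) Ψ)) from rfl]
      rw [mem_quotCoboundaries_succ]
      refine ⟨sOp (k + 1) (Ψ + tauOp (k + 1) Ψ) - Ψ, ?_, ?_⟩
      · rw [even_iff_tauOp, map_sub, tau_sOp _ hφeven hφfix]
        rw [cochain_sub_eq_add, cochain_sub_eq_add, cochain_sub_eq_add]
        rw [show (Ψ + tauOp (k+1) Ψ + sOp (k+1) (Ψ + tauOp (k+1) Ψ)) + tauOp (k+1) Ψ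
            = (sOp (k+1) (Ψ + tauOp (k+1) Ψ) + Ψ) + (tauOp (k+1) Ψ + tauOp (k+1) Ψ) from by
              abel,
          cochain_two, add_zero]
      · rw [map_sub, hδΨ]

lemma injB (k : ℕ) : Function.Injective (barB k) := by
  rw [injective_iff_map_eq_zero]
  intro c hc
  induction c using QuotientAddGroup.induction_on with
  | H z =>
      obtain ⟨⟨hzeven, hzcoc⟩, hzfix⟩ := (mem_Z0_iff _ _).1 z.2
      have hδs : δop (k + 1) (sOp (k + 1) (z : Cochain Gz (k+1)))
          ∈ quotCoboundaries Gz ℤˣ (k + 2) := by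
        have h1 : QuotientAddGroup.mk ((toK2 k).codRestrict _ (toK2_mem k) z)
            = (0 : quotCohomology Gz ℤˣ (k + 2)) := hc
        rw [QuotientAddGroup.eq_zero_iff, AddSubgroup.mem_addSubgroupOf] at h1
        exact h1
      obtain ⟨Ξ, hΞeven, hΞδ⟩ := (mem_quotCoboundaries_succ (k + 1) _).1 hδs
      have hδu : δop (k + 1) (sOp (k + 1) (z : Cochain Gz (k+1)) - Ξ) = 0 := by
        rw [map_sub, hΞδ, sub_self]
      set u : Cochain Gz (k + 1) := sOp (k + 1) (z : Cochain Gz (k+1)) - Ξ with hu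
      have hphi : (z : Cochain Gz (k+1)) = u + tauOp (k + 1) u := by
        have hsplit := sOp_split ((z : Cochain Gz (k+1))) hzeven hzfix
        have hτΞ : tauOp (k + 1) Ξ = Ξ := (even_iff_tauOp _ _).1 hΞeven
        have hs : sOp (k + 1) (z : Cochain Gz (k+1)) = u + Ξ := by rw [hu]; abel
        calc (z : Cochain Gz (k+1))
            = sOp (k+1) (z : Cochain Gz (k+1))
              + tauOp (k+1) (sOp (k+1) (z : Cochain Gz (k+1))) := hsplit.symm
          _ = (u + Ξ) + (tauOp (k+1) u + tauOp (k+1) Ξ) := by rw [hs, map_add]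
          _ = (u + tauOp (k+1) u) + (Ξ + Ξ) := by rw [hτΞ]; abel
          _ = u + tauOp (k+1) u := by rw [cochain_two, add_zero]
      show QuotientAddGroup.mk z = 0
      rw [QuotientAddGroup.eq_zero_iff, AddSubgroup.mem_addSubgroupOf, mem_B0_iff]
      cases k with
      | zero =>
          refine ⟨0, ⟨AddSubgroup.zero_mem _, map_zero _⟩, ?_⟩
          rw [map_zero]
          exact (hphi.trans (cocycle1_add_tau u hδu)).symm
      | succ k' =>
          have hδΨ : δop (k' + 1) (u.comp (hbar (k' + 1))) = u := M_acyclic k' u hδu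
          set Ψ : Cochain Gz (k' + 1) := u.comp (hbar (k' + 1))
          refine ⟨Ψ + tauOp (k' + 1) Ψ, ⟨?_, ?_⟩, ?_⟩
          · rw [even_iff_tauOp, map_add, tauOp_tauOp]
            exact add_comm _ _
          · rw [map_add, fixEv_apply, fixEv_apply, tauOp_apply, tauC_oneT, zmod2_two]
          · rw [map_add, hδΨ, ← tauOp_δop, hδΨ]
            exact hphi.symm

def equivB (k : ℕ) : H0 k ≃+ quotCohomology Gz ℤˣ (k + 2) :=
  AddEquiv.ofBijective (barB k) ⟨injB k, surjB k⟩

def equivStep (k : ℕ) : quotCohomology Gz ℤˣ (k + 2) ≃+ quotCohomology Gz ℤˣ (k + 1) :=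
  (equivB k).symm.trans (equivA k)

end
end Stmt18

/-- for `ℤ/2 = ℤˣ` acting on `ℤ` by negation, `Γ = ℤ/2`, `X = Bℤ`:
`H^q(X/Γ;ℤ/2) ≅ ℤ/2` for all `q ≥ 1`. -/
theorem stmt18 (q : ℕ) (hq : 1 ≤ q) :
    Nonempty (IGC.quotCohomology (Multiplicative ℤ) ℤˣ q ≃+ ZMod 2) := by
  induction q with
  | zero => omega
  | succ n ih =>
      rcases Nat.eq_zero_or_pos n with rfl | hn
      · exact ⟨Stmt18.equivBase⟩
      · obtain ⟨m, rfl⟩ : ∃ m, n = m + 1 := ⟨n - 1, by omega⟩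
        obtain ⟨e⟩ := ih (by omega)
        exact ⟨(Stmt18.equivStep m).trans e⟩
end
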